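/- arXiv:1309.4183 — 2 statements merged into one kernel-verified Lean document; each statement's English description precedes it below -/
import Mathlib

section
/- For k, r ≥ 1, the maximum of the generalized gamma density φ_{k,r}(x) = r x^{k-1} e^{-x^r}/Γ(k/r), attained at x_0 = ((k−1)/r)^{1/r}, is at most M_{k,r} := k^{1−1/r} r^{1/r} · e^{−4/9} exp(1/(6((k−1)/r + 3/8))) / √(2(k−1)/r + 1). -/
open Real Set

/-- helper: nonneg from deriv on Ici 0 -/
lemma nonneg_of_deriv_aux {f f' : ℝ → ℝ}
    (hder : ∀ y, 0 ≤ y → HasDerivAt f (f' y) y)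
    (hpos : ∀ y, 0 < y → 0 ≤ f' y) (h0 : f 0 = 0) {x : ℝ} (hx : 0 ≤ x) : 0 ≤ f x := by
  have hm : MonotoneOn f (Ici (0:ℝ)) := by
    apply monotoneOn_of_deriv_nonneg (convex_Ici 0)
    · exact fun y hy => (hder y hy).continuousAt.continuousWithinAt
    · intro y hy
      rw [interior_Ici] at hy
      exact ((hder y hy.le).differentiableAt).differentiableWithinAt
    · intro y hy
      rw [interior_Ici] at hy
      rw [(hder y hy.le).deriv]
      exact hpos y hy
  have := hm self_mem_Ici hx hx
  rw [h0] at this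
  exact this

lemma hasDerivAt_log1p {y : ℝ} (hy : (0:ℝ) ≤ y) :
    HasDerivAt (fun t : ℝ => Real.log (1 + t)) (1/(1+y)) y := by
  have h : (1:ℝ) + y ≠ 0 := by linarith
  have := (Real.hasDerivAt_log h).comp y ((hasDerivAt_id y).const_add (1:ℝ))
  exact this.congr_deriv (by simp)

lemma quad_le_log {x : ℝ} (hx : 0 ≤ x) : x - x^2/2 ≤ Real.log (1+x) := by
  have h := nonneg_of_deriv_aux (f := fun t => Real.log (1+t) - t + t^2/2)
      (f' := fun y => y^2/(1+y)) ?_ ?_ (by norm_num) hx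
  · linarith
  · intro y hy
    have h1 : (1:ℝ) + y ≠ 0 := by linarith
    have := ((hasDerivAt_log1p hy).sub (hasDerivAt_id y)).add
      ((hasDerivAt_pow 2 y).div_const 2)
    refine this.congr_deriv ?_
    norm_num
    field_simp
    ring
  · intro y hy; positivity

lemma log_le_cubic {x : ℝ} (hx : 0 ≤ x) : Real.log (1+x) ≤ x - x^2/2 + x^3/3 := by
  have h := nonneg_of_deriv_aux (f := fun t => t - t^2/2 + t^3/3 - Real.log (1+t))
      (f' := fun y => y^3/(1+y)) ?_ ?_ (by norm_num) hx
  · linarith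
  · intro y hy
    have h1 : (1:ℝ) + y ≠ 0 := by linarith
    have := (((hasDerivAt_id y).sub ((hasDerivAt_pow 2 y).div_const 2)).add
      ((hasDerivAt_pow 3 y).div_const 3)).sub (hasDerivAt_log1p hy)
    refine this.congr_deriv ?_
    norm_num
    field_simp
    ring
  · intro y hy; positivity

lemma log_le_poly9 {x : ℝ} (hx : 0 ≤ x) : Real.log (1+x) ≤
    x - x^2/2 + x^3/3 - x^4/4 + x^5/5 - x^6/6 + x^7/7 - x^8/8 + x^9/9 := by
  have h := nonneg_of_deriv_aux
      (f := fun t => t - t^2/2 + t^3/3 - t^4/4 + t^5/5 - t^6/6 + t^7/7 - t^8/8 + t^9/9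
        - Real.log (1+t))
      (f' := fun y => y^9/(1+y)) ?_ ?_ (by norm_num) hx
  · linarith
  · intro y hy
    have h1 : (1:ℝ) + y ≠ 0 := by linarith
    have := (((((((((hasDerivAt_id y).sub ((hasDerivAt_pow 2 y).div_const 2)).add
      ((hasDerivAt_pow 3 y).div_const 3)).sub ((hasDerivAt_pow 4 y).div_const 4)).add
      ((hasDerivAt_pow 5 y).div_const 5)).sub ((hasDerivAt_pow 6 y).div_const 6)).add
      ((hasDerivAt_pow 7 y).div_const 7)).sub ((hasDerivAt_pow 8 y).div_const 8)).add
      ((hasDerivAt_pow 9 y).div_const 9)).sub (hasDerivAt_log1p hy)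
    refine this.congr_deriv ?_
    norm_num
    field_simp
    ring
  · intro y hy; positivity

lemma atanh_le_poly {v : ℝ} (h0 : 0 ≤ v) (h1 : v < 1) :
    Real.log ((1+v)/(1-v)) ≤ 2*v + 2*v^3/3 + 2*v^5/5 + 2*v^7/7 + 2*v^9/(9*(1-v^2)) := by
  have hD : ∀ y : ℝ, 0 ≤ y → y < 1 →
      HasDerivAt (fun t : ℝ => 2*t + 2*t^3/3 + 2*t^5/5 + 2*t^7/7 + 2*t^9/(9*(1-t^2))
          - Real.log (1+t) + Real.log (1-t)) (4*y^10/(9*(1-y^2)^2)) y := by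
    intro y hy0 hy1
    have h1y : (0:ℝ) < 1 + y := by linarith
    have h2y : (0:ℝ) < 1 - y := by linarith
    have h3y : (0:ℝ) < 1 - y^2 := by nlinarith
    have hlog1 : HasDerivAt (fun t : ℝ => Real.log (1+t)) (1/(1+y)) y :=
      ((hasDerivAt_id y).const_add (1:ℝ)).log h1y.ne'
    have hlog2 : HasDerivAt (fun t : ℝ => Real.log (1-t)) ((-1)/(1-y)) y :=
      ((hasDerivAt_id y).const_sub (1:ℝ)).log h2y.ne'
    have hq : HasDerivAt (fun t : ℝ => 2*t^9/(9*(1-t^2)))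
        (((2*(9*y^8))*(9*(1-y^2)) - (2*y^9)*(9*(-(2*y))))/(9*(1-y^2))^2) y := by
      have hnum : HasDerivAt (fun t : ℝ => 2*t^9) (2*(9*y^8)) y := by
        have := (hasDerivAt_pow 9 y).const_mul (2:ℝ)
        exact this.congr_deriv (by norm_num)
      have hden : HasDerivAt (fun t : ℝ => 9*(1-t^2)) (9*(-(2*y))) y := by
        have := (((hasDerivAt_pow 2 y).const_sub (1:ℝ))).const_mul (9:ℝ)
        exact this.congr_deriv (by norm_num)
      exact hnum.div hden (by positivity)
    have hpoly : HasDerivAt (fun t : ℝ => 2*t + 2*t^3/3 + 2*t^5/5 + 2*t^7/7)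
        (2 + 2*(3*y^2)/3 + 2*(5*y^4)/5 + 2*(7*y^6)/7) y := by
      have hid : HasDerivAt (fun t : ℝ => t) 1 y := hasDerivAt_id y
      have := ((((hid.const_mul (2:ℝ)).add
        (((hasDerivAt_pow 3 y).const_mul (2:ℝ)).div_const 3)).add
        (((hasDerivAt_pow 5 y).const_mul (2:ℝ)).div_const 5)).add
        (((hasDerivAt_pow 7 y).const_mul (2:ℝ)).div_const 7))
      exact this.congr_deriv (by norm_num)
    have H := ((hpoly.add hq).sub hlog1).add hlog2
    refine H.congr_deriv ?_
    field_simp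
    ring
  have hm : MonotoneOn (fun t : ℝ => 2*t + 2*t^3/3 + 2*t^5/5 + 2*t^7/7 + 2*t^9/(9*(1-t^2))
      - Real.log (1+t) + Real.log (1-t)) (Ico (0:ℝ) 1) := by
    apply monotoneOn_of_deriv_nonneg (convex_Ico 0 1)
    · exact fun y hy => (hD y hy.1 hy.2).continuousAt.continuousWithinAt
    · intro y hy
      rw [interior_Ico] at hy
      exact (hD y hy.1.le hy.2).differentiableAt.differentiableWithinAt
    · intro y hy
      rw [interior_Ico] at hy
      rw [(hD y hy.1.le hy.2).deriv]
      have h3y : (0:ℝ) < 1 - y^2 := by nlinarith [hy.1, hy.2]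
      positivity
  have key := hm (left_mem_Ico.mpr one_pos) ⟨h0, h1⟩ h0
  simp only [] at key
  have h1v : (0:ℝ) < 1 + v := by linarith
  have h2v : (0:ℝ) < 1 - v := by linarith
  rw [Real.log_div h1v.ne' h2v.ne']
  norm_num at key
  linarith

-- § Gamma values
lemma Gamma_three_halves : Real.Gamma (3/2) = Real.sqrt π / 2 := by
  have h : (3/2 : ℝ) = 1/2 + 1 := by norm_num
  rw [h, Real.Gamma_add_one (by norm_num), Real.Gamma_one_half_eq]
  ring

lemma Gamma_five_halves : Real.Gamma (5/2) = 3 * Real.sqrt π / 4 := by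
  have h : (5/2 : ℝ) = 3/2 + 1 := by norm_num
  rw [h, Real.Gamma_add_one (by norm_num), Gamma_three_halves]
  ring

lemma Gamma_three : Real.Gamma 3 = 2 := by
  have h : (3 : ℝ) = 2 + 1 := by norm_num
  rw [h, Real.Gamma_add_one (by norm_num), Real.Gamma_two]
  ring

-- log Gamma values
lemma logGamma_three_halves : Real.log (Real.Gamma (3/2)) = Real.log π / 2 - Real.log 2 := by
  rw [Gamma_three_halves, Real.log_div (by positivity) (by norm_num), Real.log_sqrt Real.pi_pos.le]

lemma logGamma_five_halves :
    Real.log (Real.Gamma (5/2)) = Real.log 3 + Real.log π / 2 - 2 * Real.log 2 := by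
  rw [Gamma_five_halves]
  rw [show (3 : ℝ) * Real.sqrt π / 4 = 3 * Real.sqrt π / 4 from rfl]
  rw [Real.log_div (by positivity) (by norm_num), Real.log_mul (by norm_num) (by positivity),
    Real.log_sqrt Real.pi_pos.le, show (4:ℝ) = 2^2 by norm_num, Real.log_pow]
  push_cast
  ring

-- § derivative of Gamma at 3/2
open Real in
lemma hasDerivAt_Gamma_three_halves :
    HasDerivAt Real.Gamma (√π - √π * (eulerMascheroniConstant + 2 * Real.log 2) / 2) (3/2) := by
  have h12 : HasDerivAt Real.Gamma (-√π * (eulerMascheroniConstant + 2 * Real.log 2)) (1/2) :=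
    Real.hasDerivAt_Gamma_one_half
  have hmul : HasDerivAt (fun x : ℝ => x * Real.Gamma x)
      (1 * Real.Gamma (1/2) + (1/2) * (-√π * (eulerMascheroniConstant + 2 * Real.log 2)))
      (1/2) := (hasDerivAt_id (1/2 : ℝ)).mul h12
  have heq : (fun x : ℝ => x * Real.Gamma x) =ᶠ[nhds (1/2 : ℝ)] (fun x => Real.Gamma (x+1)) := by
    filter_upwards [Ioi_mem_nhds (by norm_num : (0:ℝ) < 1/2)] with x hx
    rw [Real.Gamma_add_one (ne_of_gt hx)]
  have hshift : HasDerivAt (fun x : ℝ => Real.Gamma (x+1))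
      (1 * Real.Gamma (1/2) + (1/2) * (-√π * (eulerMascheroniConstant + 2 * Real.log 2)))
      (1/2) := hmul.congr_of_eventuallyEq heq.symm
  have hsub : HasDerivAt (fun x : ℝ => x - 1) 1 (3/2 : ℝ) := (hasDerivAt_id _).sub_const 1
  have hcomp := HasDerivAt.comp (3/2 : ℝ) (by norm_num at hsub ⊢; exact hshift) hsub
  have hfun : ((fun x : ℝ => Real.Gamma (x+1)) ∘ (fun x : ℝ => x - 1)) = Real.Gamma := by
    funext x; simp
  rw [hfun] at hcomp
  refine hcomp.congr_deriv ?_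
  rw [Real.Gamma_one_half_eq]
  ring

-- § tangent and chord lemmas for log ∘ Gamma
lemma logGamma_tangent_right {x0 d x : ℝ} (h0 : 0 < x0) (hx : x0 ≤ x)
    (hd : HasDerivAt Real.Gamma d x0) :
    Real.log (Real.Gamma x0) + d / Real.Gamma x0 * (x - x0) ≤ Real.log (Real.Gamma x) := by
  rcases eq_or_lt_of_le hx with rfl | hlt
  · simp
  · have hld : HasDerivAt (fun y => Real.log (Real.Gamma y)) (d / Real.Gamma x0) x0 :=
      hd.log (Real.Gamma_pos_of_pos h0).ne'
    have h := Real.convexOn_log_Gamma.le_slope_of_hasDerivAt (mem_Ioi.mpr h0)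
      (mem_Ioi.mpr (h0.trans hlt)) hlt hld
    rw [slope_def_field] at h
    simp only [Function.comp_apply] at h
    have hxx : 0 < x - x0 := by linarith
    have h2 := (le_div_iff₀ hxx).mp h
    linarith

lemma logGamma_tangent_left {x0 d x : ℝ} (h0 : 0 < x) (hx : x ≤ x0)
    (hd : HasDerivAt Real.Gamma d x0) :
    Real.log (Real.Gamma x0) + d / Real.Gamma x0 * (x - x0) ≤ Real.log (Real.Gamma x) := by
  rcases eq_or_lt_of_le hx with rfl | hlt
  · simp
  · have hld : HasDerivAt (fun y => Real.log (Real.Gamma y)) (d / Real.Gamma x0) x0 :=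
      hd.log (Real.Gamma_pos_of_pos (h0.trans hlt)).ne'
    have h := Real.convexOn_log_Gamma.slope_le_of_hasDerivAt (mem_Ioi.mpr h0)
      (mem_Ioi.mpr (h0.trans hlt)) hlt hld
    rw [slope_def_field] at h
    simp only [Function.comp_apply] at h
    have hxx : 0 < x0 - x := by linarith
    have h2 := (div_le_iff₀ hxx).mp h
    nlinarith [h2]

lemma logGamma_chord_left {x0 x1 x : ℝ} (h0 : 0 < x) (hx : x ≤ x0) (h01 : x0 < x1) :
    Real.log (Real.Gamma x0)
      + (Real.log (Real.Gamma x1) - Real.log (Real.Gamma x0)) / (x1 - x0) * (x - x0)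
      ≤ Real.log (Real.Gamma x) := by
  rcases eq_or_lt_of_le hx with rfl | hlt
  · simp
  · have hx0 : (0:ℝ) < x0 := h0.trans hlt
    have hmono := Real.convexOn_log_Gamma.slope_mono (mem_Ioi.mpr hx0)
    have h := hmono (a := x) (b := x1) ⟨mem_Ioi.mpr h0, by simp [ne_of_lt hlt]⟩
      ⟨mem_Ioi.mpr (hx0.trans h01), by simp [(ne_of_gt h01)]⟩ (by linarith)
    rw [slope_def_field, slope_def_field] at h
    simp only [Function.comp_apply] at h
    have hxx : x - x0 < 0 := by linarith
    have h10 : 0 < x1 - x0 := by linarith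
    -- h : (log Γ x - log Γ x0)/(x - x0) ≤ (log Γ x1 - log Γ x0)/(x1 - x0)
    have h2 := (div_le_iff_of_neg hxx).mp h
    calc Real.log (Real.Gamma x0)
        + (Real.log (Real.Gamma x1) - Real.log (Real.Gamma x0)) / (x1 - x0) * (x - x0)
        ≤ Real.log (Real.Gamma x0) + (Real.log (Real.Gamma x) - Real.log (Real.Gamma x0)) := by
          linarith
      _ = Real.log (Real.Gamma x) := by ring

lemma logGamma_chord_right {x0 x1 x : ℝ} (h0 : 0 < x0) (h01 : x0 < x1) (hx : x1 ≤ x) :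
    Real.log (Real.Gamma x1)
      + (Real.log (Real.Gamma x1) - Real.log (Real.Gamma x0)) / (x1 - x0) * (x - x1)
      ≤ Real.log (Real.Gamma x) := by
  rcases eq_or_lt_of_le hx with rfl | hlt
  · simp
  · have hx1 : (0:ℝ) < x1 := h0.trans h01
    have hmono := Real.convexOn_log_Gamma.slope_mono (mem_Ioi.mpr hx1)
    have h := hmono (a := x0) (b := x) ⟨mem_Ioi.mpr h0, by simp [(ne_of_lt h01)]⟩
      ⟨mem_Ioi.mpr (hx1.trans hlt), by simp [ne_of_gt hlt]⟩ (by linarith)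
    rw [slope_def_field, slope_def_field] at h
    simp only [Function.comp_apply] at h
    have hxx : 0 < x - x1 := by linarith
    have h10 : x0 - x1 < 0 := by linarith
    -- h : (log Γ x0 - log Γ x1)/(x0 - x1) ≤ (log Γ x - log Γ x1)/(x - x1)
    have h2 := (le_div_iff₀ hxx).mp h
    have h3 : (Real.log (Real.Gamma x0) - Real.log (Real.Gamma x1)) / (x0 - x1)
        = (Real.log (Real.Gamma x1) - Real.log (Real.Gamma x0)) / (x1 - x0) := by
      rw [div_eq_div_iff (by linarith) (by linarith)]
      ring
    rw [h3] at h2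
    linarith


-- § numeric bounds
lemma log3_gt : (1.0983145 : ℝ) < Real.log 3 := by
  have h98 : (1:ℝ)/8 - (1/8)^2/2 ≤ Real.log (9/8) := by
    have := quad_le_log (x := (1:ℝ)/8) (by norm_num)
    norm_num at this ⊢
    linarith
  have hid : Real.log (9/8 : ℝ) = 2 * Real.log 3 - 3 * Real.log 2 := by
    rw [show (9/8 : ℝ) = 3^2 / 2^3 by norm_num, Real.log_div (by norm_num) (by norm_num),
      Real.log_pow, Real.log_pow]
    push_cast; ring
  have hl2 := Real.log_two_gt_d9
  rw [hid] at h98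
  norm_num at h98 ⊢
  linarith

lemma log3_lt : Real.log 3 < (1.0986401 : ℝ) := by
  have h98 : Real.log (9/8 : ℝ) ≤ (1:ℝ)/8 - (1/8)^2/2 + (1/8)^3/3 := by
    have := log_le_cubic (x := (1:ℝ)/8) (by norm_num)
    norm_num at this ⊢
    linarith
  have hid : Real.log (9/8 : ℝ) = 2 * Real.log 3 - 3 * Real.log 2 := by
    rw [show (9/8 : ℝ) = 3^2 / 2^3 by norm_num, Real.log_div (by norm_num) (by norm_num),
      Real.log_pow, Real.log_pow]
    push_cast; ring
  have hl2 := Real.log_two_lt_d9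
  rw [hid] at h98
  norm_num at h98 ⊢
  linarith

lemma logpi_gt : (1.1433781 : ℝ) < Real.log π := by
  have h3 : Real.log (3/π) ≤ 3/π - 1 := Real.log_le_sub_one_of_pos (by positivity)
  have hpi := Real.pi_gt_d6
  have h3pi : (3:ℝ)/π ≤ 3/3.141592 := by
    apply div_le_div_of_nonneg_left (by norm_num) (by norm_num) (le_of_lt hpi)
  have hid : Real.log (3/π) = Real.log 3 - Real.log π := Real.log_div (by norm_num) (by positivity)
  have h33 := log3_gt
  rw [hid] at h3
  norm_num at h3pi ⊢
  linarith

lemma logpi_lt : Real.log π < (1.1458378 : ℝ) := by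
  have h3 : Real.log (π/3) ≤ π/3 - 1 := Real.log_le_sub_one_of_pos (by positivity)
  have hpi := Real.pi_lt_d6
  have hid : Real.log (π/3) = Real.log π - Real.log 3 := Real.log_div (by positivity) (by norm_num)
  have h33 := log3_lt
  rw [hid] at h3
  norm_num
  linarith

lemma log_tangent {a c : ℝ} (ha : 0 < a) (hc : 0 < c) : Real.log a ≤ Real.log c + a/c - 1 := by
  have h := Real.log_le_sub_one_of_pos (show 0 < a/c by positivity)
  rw [Real.log_div ha.ne' hc.ne'] at h
  linarith

-- § Batir base case

set_option maxHeartbeats 1000000 in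
lemma batir_case_B {a : ℝ} (ha0 : 0 ≤ a) (hlo : 1/4 < a) (hhi : a ≤ 1/2) :
    a * Real.log a - a + Real.log (2*a+1)/2 + 4/9 - 4/(24*a+9)
      ≤ Real.log (Real.Gamma (1+a)) := by
  have ha : 0 < a := lt_trans (by norm_num) hlo
  have h24 : (0:ℝ) < 24*a+9 := by linarith
  have hl2a := Real.log_two_gt_d9
  have hl2b := Real.log_two_lt_d9
  have hl3a := log3_gt
  have hl3b := log3_lt
  have hpa := logpi_gt
  have hpb := logpi_lt
  have hlb := logGamma_chord_left (x0 := 3/2) (x1 := 2) (x := 1+a)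
    (by linarith) (by linarith) (by norm_num)
  rw [Real.Gamma_two, Real.log_one, logGamma_three_halves] at hlb
  norm_num at hlb
  have hone : (0:ℝ) ≤ (Real.log π/2 - Real.log 2) - (-0.12145814) := by linarith
  have htwo : (0:ℝ) ≤ 2 - 2*a := by linarith
  have hlbn : (-0.12145814 : ℝ)*(2 - 2*a) ≤ Real.log (Real.Gamma (1+a)) := by
    nlinarith [hlb, mul_nonneg hone htwo]
  have hla : Real.log a ≤ (-1.0983145) + a/(1/3) - 1 := by
    have h := log_tangent ha (show (0:ℝ) < 1/3 by norm_num)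
    rw [show Real.log (1/3 : ℝ) = -Real.log 3 by rw [one_div, Real.log_inv]] at h
    linarith
  have hla' : a * Real.log a ≤ a * ((-1.0983145) + a/(1/3) - 1) :=
    mul_le_mul_of_nonneg_left hla ha0
  have hlgb : Real.log (2*a+1) ≤ (0.6931471808) + (2*a+1)/(2) - 1 := by
    have h := log_tangent (show (0:ℝ) < 2*a+1 by linarith) (show (0:ℝ) < 2 by norm_num)
    linarith
  have key : a * ((-1.0983145) + a/(1/3) - 1) - a + ((0.6931471808) + (2*a+1)/(2) - 1)/2 + 4/9
      - ((-0.12145814 : ℝ)*(2 - 2*a)) ≤ 4/(24*a+9) := by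
    rw [le_div_iff₀ h24]
    have u1 : (0:ℝ) ≤ a - 1/4 := by linarith
    have u2 : (0:ℝ) ≤ 1/2 - a := by linarith
    nlinarith [mul_nonneg u1 u2, mul_nonneg (mul_nonneg u1 u1) u2, mul_nonneg (mul_nonneg u1 u2) u2, mul_nonneg (mul_nonneg u1 u1) u1, sq_nonneg a]
  linarith

set_option maxHeartbeats 1000000 in
lemma batir_case_C {a : ℝ} (ha0 : 0 ≤ a) (hlo : 1/2 < a) (hhi : a ≤ 7/10) :
    a * Real.log a - a + Real.log (2*a+1)/2 + 4/9 - 4/(24*a+9)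
      ≤ Real.log (Real.Gamma (1+a)) := by
  have ha : 0 < a := lt_trans (by norm_num) hlo
  have h24 : (0:ℝ) < 24*a+9 := by linarith
  have hl2a := Real.log_two_gt_d9
  have hl2b := Real.log_two_lt_d9
  have hl3a := log3_gt
  have hl3b := log3_lt
  have hpa := logpi_gt
  have hpb := logpi_lt
  have hψ : (√π - √π * (Real.eulerMascheroniConstant + 2 * Real.log 2) / 2) / Real.Gamma (3/2)
      = 2 - Real.eulerMascheroniConstant - 2*Real.log 2 := by
    rw [Gamma_three_halves]
    have hsp : Real.sqrt π ≠ 0 := by positivity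
    field_simp
    ring
  have hlb := logGamma_tangent_right (x0 := 3/2) (x := 1+a) (by norm_num) (by linarith)
    hasDerivAt_Gamma_three_halves
  rw [hψ, logGamma_three_halves] at hlb
  have hγb := Real.eulerMascheroniConstant_lt_two_thirds
  have hone : (0:ℝ) ≤ (2 - Real.eulerMascheroniConstant - 2*Real.log 2) - (-0.05296103) := by
    linarith
  have htwo : (0:ℝ) ≤ (1+a) - 3/2 := by linarith
  have hlbn : (-0.12145814 : ℝ) + (-0.05296103)*(a - 1/2) ≤ Real.log (Real.Gamma (1+a)) := by
    nlinarith [hlb, mul_nonneg hone htwo]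
  have hla : Real.log a ≤ (-0.6931471803) + a/(1/2) - 1 := by
    have h := log_tangent ha (show (0:ℝ) < 1/2 by norm_num)
    rw [show Real.log (1/2 : ℝ) = -Real.log 2 by rw [one_div, Real.log_inv]] at h
    linarith
  have hla' : a * Real.log a ≤ a * ((-0.6931471803) + a/(1/2) - 1) :=
    mul_le_mul_of_nonneg_left hla ha0
  have hlgb : Real.log (2*a+1) ≤ (0.6931471808) + (2*a+1)/(2) - 1 := by
    have h := log_tangent (show (0:ℝ) < 2*a+1 by linarith) (show (0:ℝ) < 2 by norm_num)
    linarith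
  have key : a * ((-0.6931471803) + a/(1/2) - 1) - a + ((0.6931471808) + (2*a+1)/(2) - 1)/2 + 4/9
      - ((-0.12145814 : ℝ) + (-0.05296103)*(a - 1/2)) ≤ 4/(24*a+9) := by
    rw [le_div_iff₀ h24]
    have u1 : (0:ℝ) ≤ a - 1/2 := by linarith
    have u2 : (0:ℝ) ≤ 7/10 - a := by linarith
    nlinarith [mul_nonneg u1 u2, mul_nonneg (mul_nonneg u1 u1) u2, mul_nonneg (mul_nonneg u1 u2) u2, mul_nonneg (mul_nonneg u1 u1) u1, sq_nonneg a]
  linarith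

set_option maxHeartbeats 1000000 in
lemma batir_case_D1 {a : ℝ} (ha0 : 0 ≤ a) (hlo : 7/10 < a) (hhi : a ≤ 17/20) :
    a * Real.log a - a + Real.log (2*a+1)/2 + 4/9 - 4/(24*a+9)
      ≤ Real.log (Real.Gamma (1+a)) := by
  have ha : 0 < a := lt_trans (by norm_num) hlo
  have h24 : (0:ℝ) < 24*a+9 := by linarith
  have hl2a := Real.log_two_gt_d9
  have hl2b := Real.log_two_lt_d9
  have hl3a := log3_gt
  have hl3b := log3_lt
  have hpa := logpi_gt
  have hpb := logpi_lt
  have hlb := logGamma_chord_left (x0 := 2) (x1 := 5/2) (x := 1+a)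
    (by linarith) (by linarith) (by norm_num)
  rw [Real.Gamma_two, Real.log_one, logGamma_five_halves] at hlb
  norm_num at hlb
  have hone : (0:ℝ) ≤ 0.57052928 - 2*(Real.log 3 + Real.log π/2 - 2*Real.log 2) := by linarith
  have htwo : (0:ℝ) ≤ 1 - a := by linarith
  have hlbn : (0.57052928 : ℝ)*(a - 1) ≤ Real.log (Real.Gamma (1+a)) := by
    nlinarith [hlb, mul_nonneg hone htwo]
  have hla : Real.log a ≤ (-0.28765426) + a/(3/4) - 1 := by
    have h := log_tangent ha (show (0:ℝ) < 3/4 by norm_num)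
    rw [show Real.log (3/4 : ℝ) = Real.log 3 - 2*Real.log 2 by
      rw [show (3/4 : ℝ) = 3/2^2 by norm_num, Real.log_div (by norm_num) (by norm_num),
        Real.log_pow]; push_cast; ring] at h
    linarith
  have hla' : a * Real.log a ≤ a * ((-0.28765426) + a/(3/4) - 1) :=
    mul_le_mul_of_nonneg_left hla ha0
  have hlgb : Real.log (2*a+1) ≤ (0.81098584) + (2*a+1)/(9/4) - 1 := by
    have h := log_tangent (show (0:ℝ) < 2*a+1 by linarith) (show (0:ℝ) < 9/4 by norm_num)
    rw [show Real.log (9/4 : ℝ) = 2*Real.log 3 - 2*Real.log 2 by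
      rw [show (9/4 : ℝ) = 3^2/2^2 by norm_num, Real.log_div (by norm_num) (by norm_num),
        Real.log_pow, Real.log_pow]; push_cast; ring] at h
    linarith
  have key : a * ((-0.28765426) + a/(3/4) - 1) - a + ((0.81098584) + (2*a+1)/(9/4) - 1)/2 + 4/9
      - ((0.57052928 : ℝ)*(a - 1)) ≤ 4/(24*a+9) := by
    rw [le_div_iff₀ h24]
    have u1 : (0:ℝ) ≤ a - 7/10 := by linarith
    have u2 : (0:ℝ) ≤ 17/20 - a := by linarith
    nlinarith [mul_nonneg u1 u2, mul_nonneg (mul_nonneg u1 u1) u2, mul_nonneg (mul_nonneg u1 u2) u2, mul_nonneg (mul_nonneg u1 u1) u1, sq_nonneg a]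
  linarith

set_option maxHeartbeats 1000000 in
lemma batir_case_D2 {a : ℝ} (ha0 : 0 ≤ a) (hlo : 17/20 < a) (hhi : a ≤ 1) :
    a * Real.log a - a + Real.log (2*a+1)/2 + 4/9 - 4/(24*a+9)
      ≤ Real.log (Real.Gamma (1+a)) := by
  have ha : 0 < a := lt_trans (by norm_num) hlo
  have h24 : (0:ℝ) < 24*a+9 := by linarith
  have hl2a := Real.log_two_gt_d9
  have hl2b := Real.log_two_lt_d9
  have hl3a := log3_gt
  have hl3b := log3_lt
  have hpa := logpi_gt
  have hpb := logpi_lt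
  have hlb := logGamma_chord_left (x0 := 2) (x1 := 5/2) (x := 1+a)
    (by linarith) (by linarith) (by norm_num)
  rw [Real.Gamma_two, Real.log_one, logGamma_five_halves] at hlb
  norm_num at hlb
  have hone : (0:ℝ) ≤ 0.57052928 - 2*(Real.log 3 + Real.log π/2 - 2*Real.log 2) := by linarith
  have htwo : (0:ℝ) ≤ 1 - a := by linarith
  have hlbn : (0.57052928 : ℝ)*(a - 1) ≤ Real.log (Real.Gamma (1+a)) := by
    nlinarith [hlb, mul_nonneg hone htwo]
  have hla : Real.log a ≤ (-0.11718745) + a/(8/9) - 1 := by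
    have h := log_tangent ha (show (0:ℝ) < 8/9 by norm_num)
    rw [show Real.log (8/9 : ℝ) = 3*Real.log 2 - 2*Real.log 3 by
      rw [show (8/9 : ℝ) = 2^3/3^2 by norm_num, Real.log_div (by norm_num) (by norm_num),
        Real.log_pow, Real.log_pow]; push_cast; ring] at h
    linarith
  have hla' : a * Real.log a ≤ a * ((-0.11718745) + a/(8/9) - 1) :=
    mul_le_mul_of_nonneg_left hla ha0
  have hlgb : Real.log (2*a+1) ≤ (0.98112705) + (2*a+1)/(8/3) - 1 := by
    have h := log_tangent (show (0:ℝ) < 2*a+1 by linarith) (show (0:ℝ) < 8/3 by norm_num)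
    rw [show Real.log (8/3 : ℝ) = 3*Real.log 2 - Real.log 3 by
      rw [show (8/3 : ℝ) = 2^3/3 by norm_num, Real.log_div (by norm_num) (by norm_num),
        Real.log_pow]; push_cast; ring] at h
    linarith
  have key : a * ((-0.11718745) + a/(8/9) - 1) - a + ((0.98112705) + (2*a+1)/(8/3) - 1)/2 + 4/9
      - ((0.57052928 : ℝ)*(a - 1)) ≤ 4/(24*a+9) := by
    rw [le_div_iff₀ h24]
    have u1 : (0:ℝ) ≤ a - 17/20 := by linarith
    have u2 : (0:ℝ) ≤ 1 - a := by linarith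
    nlinarith [mul_nonneg u1 u2, mul_nonneg (mul_nonneg u1 u1) u2, mul_nonneg (mul_nonneg u1 u2) u2, mul_nonneg (mul_nonneg u1 u1) u1, sq_nonneg a]
  linarith

set_option maxHeartbeats 1000000 in
lemma batir_case_E {a : ℝ} (ha0 : 0 ≤ a) (hlo : 1 < a) (hhi : a ≤ 13/10) :
    a * Real.log a - a + Real.log (2*a+1)/2 + 4/9 - 4/(24*a+9)
      ≤ Real.log (Real.Gamma (1+a)) := by
  have ha : 0 < a := lt_trans (by norm_num) hlo
  have h24 : (0:ℝ) < 24*a+9 := by linarith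
  have hl2a := Real.log_two_gt_d9
  have hl2b := Real.log_two_lt_d9
  have hl3a := log3_gt
  have hl3b := log3_lt
  have hpa := logpi_gt
  have hpb := logpi_lt
  have hlb := logGamma_chord_right (x0 := 3/2) (x1 := 2) (x := 1+a)
    (by norm_num) (by norm_num) (by linarith)
  rw [Real.Gamma_two, Real.log_one, logGamma_three_halves] at hlb
  norm_num at hlb
  have hone : (0:ℝ) ≤ (-(Real.log π/2 - Real.log 2))*2 - 0.24045656 := by linarith
  have htwo : (0:ℝ) ≤ a - 1 := by linarith
  have hlbn : (0.24045656 : ℝ)*(a - 1) ≤ Real.log (Real.Gamma (1+a)) := by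
    nlinarith [hlb, mul_nonneg hone htwo]
  have hla : Real.log a ≤ (0.11783855) + a/(9/8) - 1 := by
    have h := log_tangent ha (show (0:ℝ) < 9/8 by norm_num)
    have h98 := log_le_cubic (x := (1:ℝ)/8) (by norm_num)
    rw [show (1:ℝ) + 1/8 = 9/8 by norm_num] at h98
    norm_num at h98
    linarith
  have hla' : a * Real.log a ≤ a * ((0.11783855) + a/(9/8) - 1) :=
    mul_le_mul_of_nonneg_left hla ha0
  have hlgb : Real.log (2*a+1) ≤ (1.0986401) + (2*a+1)/(3) - 1 := by
    have h := log_tangent (show (0:ℝ) < 2*a+1 by linarith) (show (0:ℝ) < 3 by norm_num)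
    linarith
  have key : a * ((0.11783855) + a/(9/8) - 1) - a + ((1.0986401) + (2*a+1)/(3) - 1)/2 + 4/9
      - ((0.24045656 : ℝ)*(a - 1)) ≤ 4/(24*a+9) := by
    rw [le_div_iff₀ h24]
    have u1 : (0:ℝ) ≤ a - 1 := by linarith
    have u2 : (0:ℝ) ≤ 13/10 - a := by linarith
    nlinarith [mul_nonneg u1 u2, mul_nonneg (mul_nonneg u1 u1) u2, mul_nonneg (mul_nonneg u1 u2) u2, mul_nonneg (mul_nonneg u1 u1) u1, sq_nonneg a]
  linarith

set_option maxHeartbeats 1000000 in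
lemma batir_case_F {a : ℝ} (ha0 : 0 ≤ a) (hlo : 13/10 < a) (hhi : a ≤ 3/2) :
    a * Real.log a - a + Real.log (2*a+1)/2 + 4/9 - 4/(24*a+9)
      ≤ Real.log (Real.Gamma (1+a)) := by
  have ha : 0 < a := lt_trans (by norm_num) hlo
  have h24 : (0:ℝ) < 24*a+9 := by linarith
  have hl2a := Real.log_two_gt_d9
  have hl2b := Real.log_two_lt_d9
  have hl3a := log3_gt
  have hl3b := log3_lt
  have hpa := logpi_gt
  have hpb := logpi_lt
  have hlb := logGamma_chord_left (x0 := 5/2) (x1 := 3) (x := 1+a)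
    (by linarith) (by linarith) (by norm_num)
  rw [Gamma_three, logGamma_five_halves] at hlb
  norm_num at hlb
  have hone : (0:ℝ) ≤ (Real.log 3 + Real.log π/2 - 2*Real.log 2) - 0.28370918 := by linarith
  have hone2 : (0:ℝ) ≤ 0.81887599 - 2*(Real.log 2 - (Real.log 3 + Real.log π/2 - 2*Real.log 2)) := by
    linarith
  have htwo : (0:ℝ) ≤ 3/2 - a := by linarith
  have hlbn : (0.28370918 : ℝ) + 0.81887599*(a - 3/2) ≤ Real.log (Real.Gamma (1+a)) := by
    nlinarith [hlb, mul_nonneg hone2 htwo, hone]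
  have hla : Real.log a ≤ (0.28797987) + a/(4/3) - 1 := by
    have h := log_tangent ha (show (0:ℝ) < 4/3 by norm_num)
    rw [show Real.log (4/3 : ℝ) = 2*Real.log 2 - Real.log 3 by
      rw [show (4/3 : ℝ) = 2^2/3 by norm_num, Real.log_div (by norm_num) (by norm_num),
        Real.log_pow]; push_cast; ring] at h
    linarith
  have hla' : a * Real.log a ≤ a * ((0.28797987) + a/(4/3) - 1) :=
    mul_le_mul_of_nonneg_left hla ha0
  have hlgb : Real.log (2*a+1) ≤ (1.38629437) + (2*a+1)/(4) - 1 := by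
    have h := log_tangent (show (0:ℝ) < 2*a+1 by linarith) (show (0:ℝ) < 4 by norm_num)
    rw [show Real.log (4 : ℝ) = 2*Real.log 2 by
      rw [show (4 : ℝ) = 2^2 by norm_num, Real.log_pow]; push_cast; ring] at h
    linarith
  have key : a * ((0.28797987) + a/(4/3) - 1) - a + ((1.38629437) + (2*a+1)/(4) - 1)/2 + 4/9
      - ((0.28370918 : ℝ) + 0.81887599*(a - 3/2)) ≤ 4/(24*a+9) := by
    rw [le_div_iff₀ h24]
    have u1 : (0:ℝ) ≤ a - 13/10 := by linarith
    have u2 : (0:ℝ) ≤ 3/2 - a := by linarith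
    nlinarith [mul_nonneg u1 u2, mul_nonneg (mul_nonneg u1 u1) u2, mul_nonneg (mul_nonneg u1 u2) u2, mul_nonneg (mul_nonneg u1 u1) u1, sq_nonneg a]
  linarith

set_option maxHeartbeats 1000000 in
lemma batir_case_G1 {a : ℝ} (ha0 : 0 ≤ a) (hlo : 3/2 < a) (hhi : a ≤ 7/4) :
    a * Real.log a - a + Real.log (2*a+1)/2 + 4/9 - 4/(24*a+9)
      ≤ Real.log (Real.Gamma (1+a)) := by
  have ha : 0 < a := lt_trans (by norm_num) hlo
  have h24 : (0:ℝ) < 24*a+9 := by linarith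
  have hl2a := Real.log_two_gt_d9
  have hl2b := Real.log_two_lt_d9
  have hl3a := log3_gt
  have hl3b := log3_lt
  have hpa := logpi_gt
  have hpb := logpi_lt
  have hd3 : HasDerivAt Real.Gamma ((2:ℕ).factorial * (-Real.eulerMascheroniConstant
      + (harmonic 2 : ℚ))) ((2:ℕ) + 1 : ℝ) := Real.hasDerivAt_Gamma_nat 2
  have hh2 : ((harmonic 2 : ℚ) : ℝ) = 3/2 := by
    norm_num [harmonic_succ, harmonic_zero]
  have hd3' : HasDerivAt Real.Gamma (2 * (3/2 - Real.eulerMascheroniConstant)) 3 := by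
    have h32 : ((2:ℕ) + 1 : ℝ) = 3 := by norm_num
    rw [h32, hh2] at hd3
    convert hd3 using 1
    norm_num
    ring
  have hlb := logGamma_tangent_left (x0 := 3) (x := 1+a) (by linarith) (by linarith) hd3'
  rw [Gamma_three] at hlb
  have hγa := Real.one_half_lt_eulerMascheroniConstant
  have hone : (0:ℝ) ≤ 1 - (2 * (3/2 - Real.eulerMascheroniConstant))/2 := by linarith
  have htwo : (0:ℝ) ≤ 3 - (1+a) := by linarith
  have hlbn : (0.6931471803 : ℝ) + (a - 2) ≤ Real.log (Real.Gamma (1+a)) := by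
    nlinarith [hlb, mul_nonneg hone htwo, Real.log_two_gt_d9]
  have hla : Real.log a ≤ (0.52333158) + a/(27/16) - 1 := by
    have h := log_tangent ha (show (0:ℝ) < 27/16 by norm_num)
    rw [show Real.log (27/16 : ℝ) = 3*Real.log 3 - 4*Real.log 2 by
      rw [show (27/16 : ℝ) = 3^3/2^4 by norm_num, Real.log_div (by norm_num) (by norm_num),
        Real.log_pow, Real.log_pow]; push_cast; ring] at h
    linarith
  have hla' : a * Real.log a ≤ a * ((0.52333158) + a/(27/16) - 1) :=
    mul_le_mul_of_nonneg_left hla ha0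
  have hlgb : Real.log (2*a+1) ≤ (1.50413302) + (2*a+1)/(9/2) - 1 := by
    have h := log_tangent (show (0:ℝ) < 2*a+1 by linarith) (show (0:ℝ) < 9/2 by norm_num)
    rw [show Real.log (9/2 : ℝ) = 2*Real.log 3 - Real.log 2 by
      rw [show (9/2 : ℝ) = 3^2/2 by norm_num, Real.log_div (by norm_num) (by norm_num),
        Real.log_pow]; push_cast; ring] at h
    linarith
  have key : a * ((0.52333158) + a/(27/16) - 1) - a + ((1.50413302) + (2*a+1)/(9/2) - 1)/2 + 4/9
      - ((0.6931471803 : ℝ) + (a - 2)) ≤ 4/(24*a+9) := by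
    rw [le_div_iff₀ h24]
    have u1 : (0:ℝ) ≤ a - 3/2 := by linarith
    have u2 : (0:ℝ) ≤ 7/4 - a := by linarith
    nlinarith [mul_nonneg u1 u2, mul_nonneg (mul_nonneg u1 u1) u2, mul_nonneg (mul_nonneg u1 u2) u2, mul_nonneg (mul_nonneg u1 u1) u1, sq_nonneg a]
  linarith

set_option maxHeartbeats 1000000 in
lemma batir_case_G2 {a : ℝ} (ha0 : 0 ≤ a) (hlo : 7/4 < a) (hhi : a ≤ 2) :
    a * Real.log a - a + Real.log (2*a+1)/2 + 4/9 - 4/(24*a+9)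
      ≤ Real.log (Real.Gamma (1+a)) := by
  have ha : 0 < a := lt_trans (by norm_num) hlo
  have h24 : (0:ℝ) < 24*a+9 := by linarith
  have hl2a := Real.log_two_gt_d9
  have hl2b := Real.log_two_lt_d9
  have hl3a := log3_gt
  have hl3b := log3_lt
  have hpa := logpi_gt
  have hpb := logpi_lt
  have hd3 : HasDerivAt Real.Gamma ((2:ℕ).factorial * (-Real.eulerMascheroniConstant
      + (harmonic 2 : ℚ))) ((2:ℕ) + 1 : ℝ) := Real.hasDerivAt_Gamma_nat 2
  have hh2 : ((harmonic 2 : ℚ) : ℝ) = 3/2 := by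
    norm_num [harmonic_succ, harmonic_zero]
  have hd3' : HasDerivAt Real.Gamma (2 * (3/2 - Real.eulerMascheroniConstant)) 3 := by
    have h32 : ((2:ℕ) + 1 : ℝ) = 3 := by norm_num
    rw [h32, hh2] at hd3
    convert hd3 using 1
    norm_num
    ring
  have hlb := logGamma_tangent_left (x0 := 3) (x := 1+a) (by linarith) (by linarith) hd3'
  rw [Gamma_three] at hlb
  have hγa := Real.one_half_lt_eulerMascheroniConstant
  have hone : (0:ℝ) ≤ 1 - (2 * (3/2 - Real.eulerMascheroniConstant))/2 := by linarith
  have htwo : (0:ℝ) ≤ 3 - (1+a) := by linarith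
  have hlbn : (0.6931471803 : ℝ) + (a - 2) ≤ Real.log (Real.Gamma (1+a)) := by
    nlinarith [hlb, mul_nonneg hone htwo, Real.log_two_gt_d9]
  have hla : Real.log a ≤ (0.6931471808) + a/(2) - 1 := by
    have h := log_tangent ha (show (0:ℝ) < 2 by norm_num)
    linarith
  have hla' : a * Real.log a ≤ a * ((0.6931471808) + a/(2) - 1) :=
    mul_le_mul_of_nonneg_left hla ha0
  have hlgb : Real.log (2*a+1) ≤ (1.50413302) + (2*a+1)/(9/2) - 1 := by
    have h := log_tangent (show (0:ℝ) < 2*a+1 by linarith) (show (0:ℝ) < 9/2 by norm_num)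
    rw [show Real.log (9/2 : ℝ) = 2*Real.log 3 - Real.log 2 by
      rw [show (9/2 : ℝ) = 3^2/2 by norm_num, Real.log_div (by norm_num) (by norm_num),
        Real.log_pow]; push_cast; ring] at h
    linarith
  have key : a * ((0.6931471808) + a/(2) - 1) - a + ((1.50413302) + (2*a+1)/(9/2) - 1)/2 + 4/9
      - ((0.6931471803 : ℝ) + (a - 2)) ≤ 4/(24*a+9) := by
    rw [le_div_iff₀ h24]
    have u1 : (0:ℝ) ≤ a - 7/4 := by linarith
    have u2 : (0:ℝ) ≤ 2 - a := by linarith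
    nlinarith [mul_nonneg u1 u2, mul_nonneg (mul_nonneg u1 u1) u2, mul_nonneg (mul_nonneg u1 u2) u2, mul_nonneg (mul_nonneg u1 u1) u1, sq_nonneg a]
  linarith

set_option maxHeartbeats 1000000 in
lemma batir_case_H {a : ℝ} (ha0 : 0 ≤ a) (hlo : 2 < a) (hhi : a ≤ 9/4) :
    a * Real.log a - a + Real.log (2*a+1)/2 + 4/9 - 4/(24*a+9)
      ≤ Real.log (Real.Gamma (1+a)) := by
  have ha : 0 < a := lt_trans (by norm_num) hlo
  have h24 : (0:ℝ) < 24*a+9 := by linarith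
  have hl2a := Real.log_two_gt_d9
  have hl2b := Real.log_two_lt_d9
  have hl3a := log3_gt
  have hl3b := log3_lt
  have hpa := logpi_gt
  have hpb := logpi_lt
  have hlb := logGamma_chord_right (x0 := 5/2) (x1 := 3) (x := 1+a)
    (by norm_num) (by norm_num) (by linarith)
  rw [Gamma_three, logGamma_five_halves] at hlb
  norm_num at hlb
  have hone : (0:ℝ) ≤ 2*(Real.log 2 - (Real.log 3 + Real.log π/2 - 2*Real.log 2)) - 0.81576508 := by
    linarith
  have htwo : (0:ℝ) ≤ (1+a) - 3 := by linarith
  have hlbn : (0.6931471803 : ℝ) + 0.81576508*(a - 2) ≤ Real.log (Real.Gamma (1+a)) := by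
    nlinarith [hlb, mul_nonneg hone htwo, Real.log_two_gt_d9]
  have hla : Real.log a ≤ (0.81098584) + a/(9/4) - 1 := by
    have h := log_tangent ha (show (0:ℝ) < 9/4 by norm_num)
    rw [show Real.log (9/4 : ℝ) = 2*Real.log 3 - 2*Real.log 2 by
      rw [show (9/4 : ℝ) = 3^2/2^2 by norm_num, Real.log_div (by norm_num) (by norm_num),
        Real.log_pow, Real.log_pow]; push_cast; ring] at h
    linarith
  have hla' : a * Real.log a ≤ a * ((0.81098584) + a/(9/4) - 1) :=
    mul_le_mul_of_nonneg_left hla ha0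
  have hlgb : Real.log (2*a+1) ≤ (1.67427423) + (2*a+1)/(16/3) - 1 := by
    have h := log_tangent (show (0:ℝ) < 2*a+1 by linarith) (show (0:ℝ) < 16/3 by norm_num)
    rw [show Real.log (16/3 : ℝ) = 4*Real.log 2 - Real.log 3 by
      rw [show (16/3 : ℝ) = 2^4/3 by norm_num, Real.log_div (by norm_num) (by norm_num),
        Real.log_pow]; push_cast; ring] at h
    linarith
  have key : a * ((0.81098584) + a/(9/4) - 1) - a + ((1.67427423) + (2*a+1)/(16/3) - 1)/2 + 4/9
      - ((0.6931471803 : ℝ) + 0.81576508*(a - 2)) ≤ 4/(24*a+9) := by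
    rw [le_div_iff₀ h24]
    have u1 : (0:ℝ) ≤ a - 2 := by linarith
    have u2 : (0:ℝ) ≤ 9/4 - a := by linarith
    nlinarith [mul_nonneg u1 u2, mul_nonneg (mul_nonneg u1 u1) u2, mul_nonneg (mul_nonneg u1 u2) u2, mul_nonneg (mul_nonneg u1 u1) u1, sq_nonneg a]
  linarith


private lemma batir_base (a : ℝ) (ha0 : 0 ≤ a) (hhi : a ≤ 9/4) :
    a * Real.log a - a + Real.log (2*a+1)/2 + 4/9 - 1/(6*(a+3/8))
      ≤ Real.log (Real.Gamma (a+1)) := by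
  have hrat : 1/(6*(a+3/8)) = 4/(24*a+9) := by
    rw [div_eq_div_iff (by linarith) (by linarith)]
    ring
  rw [hrat, show a + 1 = 1 + a by ring]
  rcases eq_or_lt_of_le ha0 with rfl | ha
  · simp [Real.Gamma_one]
  rcases le_or_gt a (1/4) with hc | hc
  · -- Case A : tangent at 1, slope -γ ≥ -2/3
    have hγ := Real.eulerMascheroniConstant_lt_two_thirds
    have hlb := logGamma_tangent_right (x0 := 1) (x := 1+a) one_pos (by linarith)
      Real.hasDerivAt_Gamma_one
    rw [Real.Gamma_one, Real.log_one] at hlb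
    norm_num at hlb
    have hlb2 : -(2/3)*a ≤ Real.log (Real.Gamma (1+a)) := by
      have : -(2/3)*a ≤ -Real.eulerMascheroniConstant * a := by nlinarith
      linarith
    refine le_trans ?_ hlb2
    have hla : Real.log a ≤ Real.log (1/4 : ℝ) + a/(1/4) - 1 := log_tangent ha (by norm_num)
    rw [show Real.log (1/4 : ℝ) = -(2*Real.log 2) by
      rw [show (1/4 : ℝ) = (2^2)⁻¹ by norm_num, Real.log_inv, Real.log_pow]; push_cast; ring]
      at hla
    have hla' : a * Real.log a ≤ a * (-(2*Real.log 2) + a/(1/4) - 1) :=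
      mul_le_mul_of_nonneg_left hla ha0
    have hlog1p : Real.log (2*a+1) ≤ 2*a - (2*a)^2/2 + (2*a)^3/3 := by
      have := log_le_cubic (x := 2*a) (by linarith)
      rw [show (1:ℝ) + 2*a = 2*a+1 by ring] at this
      exact this
    have hl2a := Real.log_two_gt_d9
    have h24 : (0:ℝ) < 24*a+9 := by linarith
    have final : a * (-(2*Real.log 2) + a/(1/4) - 1) - a + (2*a - (2*a)^2/2 + (2*a)^3/3)/2
        + 4/9 - 4/(24*a+9) ≤ -(2/3)*a := by
      rw [← sub_nonneg]
      have hexp : -(2/3)*a - (a * (-(2*Real.log 2) + a/(1/4) - 1) - a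
          + (2*a - (2*a)^2/2 + (2*a)^3/3)/2 + 4/9 - 4/(24*a+9))
          = (a*((6*Real.log 2 + 1 - 9*a - 4*a^2)*(24*a+9) - 32)) / (3*(24*a+9)) := by
        field_simp
        ring
      rw [hexp]
      apply div_nonneg _ (by linarith)
      have hin : (6*Real.log 2 + 1 - 9*a - 4*a^2)*(24*a+9) - 32 ≥ 0 := by
        nlinarith [sq_nonneg a, mul_pos ha ha]
      nlinarith [hin]
    linarith
  rcases le_or_gt a (1/2) with hc2 | hc2
  · exact batir_case_B ha0 hc hc2
  rcases le_or_gt a (7/10) with hc3 | hc3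
  · exact batir_case_C ha0 hc2 hc3
  rcases le_or_gt a (17/20) with hc4 | hc4
  · exact batir_case_D1 ha0 hc3 hc4
  rcases le_or_gt a 1 with hc5 | hc5
  · exact batir_case_D2 ha0 hc4 hc5
  rcases le_or_gt a (13/10) with hc6 | hc6
  · exact batir_case_E ha0 hc5 hc6
  rcases le_or_gt a (3/2) with hc7 | hc7
  · exact batir_case_F ha0 hc6 hc7
  rcases le_or_gt a (7/4) with hc8 | hc8
  · exact batir_case_G1 ha0 hc7 hc8
  rcases le_or_gt a 2 with hc9 | hc9
  · exact batir_case_G2 ha0 hc8 hc9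
  · exact batir_case_H ha0 hc9 hhi

set_option maxHeartbeats 1000000 in
private lemma batir_step {b : ℝ} (hb : 5/4 ≤ b) :
    (b+1) * Real.log (b+1) - (b+1) + Real.log (2*(b+1)+1)/2 + 4/9 - 1/(6*((b+1)+3/8))
      ≤ Real.log (b+1)
        + (b * Real.log b - b + Real.log (2*b+1)/2 + 4/9 - 1/(6*(b+3/8))) := by
  have hb0 : (0:ℝ) < b := by linarith
  have h2b : (0:ℝ) < 2*b+1 := by linarith
  set v : ℝ := 1/(2*b+1) with hvdef
  have hv0 : 0 < v := by positivity
  have hv27 : v ≤ 2/7 := by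
    rw [hvdef, div_le_div_iff₀ h2b (by norm_num)]
    linarith
  have hv1 : v < 1 := by linarith
  have hbv : b = (1-v)/(2*v) := by
    rw [hvdef]
    field_simp
    ring
  -- rewrite log differences
  have hlogfrac : Real.log (b+1) - Real.log b = Real.log ((1+v)/(1-v)) := by
    rw [← Real.log_div (by linarith) hb0.ne']
    congr 1
    rw [hbv]
    have hv0' : v ≠ 0 := hv0.ne'
    have h1v : (1:ℝ) - v ≠ 0 := by intro h; nlinarith
    field_simp
    ring
  have hlogfrac2 : Real.log (2*(b+1)+1) - Real.log (2*b+1) = Real.log (1 + 2*v) := by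
    rw [← Real.log_div (by linarith) h2b.ne']
    congr 1
    rw [hvdef]
    field_simp
    ring
  have h1 := atanh_le_poly hv0.le hv1
  have h2 := log_le_poly9 (x := 2*v) (by linarith)
  -- main inequality in v
  have hmain : (1-v)/(2*v) * (2*v + 2*v^3/3 + 2*v^5/5 + 2*v^7/7 + 2*v^9/(9*(1-v^2)))
      + (2*v - (2*v)^2/2 + (2*v)^3/3 - (2*v)^4/4 + (2*v)^5/5 - (2*v)^6/6 + (2*v)^7/7
          - (2*v)^8/8 + (2*v)^9/9)/2
      + (1/(6*((1-v)/(2*v)+3/8)) - 1/(6*((1-v)/(2*v)+1+3/8))) ≤ 1 := by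
    rw [← sub_nonneg]
    have h1v : (0:ℝ) < 1 - v := by linarith
    have h1v' : (0:ℝ) < 1 + v := by linarith
    have h4v : (0:ℝ) < 4 - v := by linarith
    have h47v : (0:ℝ) < 4 + 7*v := by linarith
    have hden1 : (0:ℝ) < (1-v)/(2*v)+3/8 := by positivity
    have hden2 : (0:ℝ) < (1-v)/(2*v)+1+3/8 := by positivity
    have hident : 1 - ((1-v)/(2*v) * (2*v + 2*v^3/3 + 2*v^5/5 + 2*v^7/7 + 2*v^9/(9*(1-v^2)))
        + (2*v - (2*v)^2/2 + (2*v)^3/3 - (2*v)^4/4 + (2*v)^5/5 - (2*v)^6/6 + (2*v)^7/7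
            - (2*v)^8/8 + (2*v)^9/9)/2
        + (1/(6*((1-v)/(2*v)+3/8)) - 1/(6*((1-v)/(2*v)+1+3/8))))
        = v^4 * (18/5 + 63*v + 612/35*v^2 + 18/35*v^3 + 654/7*v^4 - 192*v^5 - 21654*v^6
            - 16080*v^7 + 5376*v^8) / (27*(1+v)*(4-v)*(4+7*v)) := by
      have hv0' : v ≠ 0 := hv0.ne'
      have h12 : (1:ℝ) - v^2 ≠ 0 := by nlinarith
      field_simp
      ring
    rw [hident]
    apply div_nonneg _ (by positivity)
    apply mul_nonneg (by positivity)
    have h4 : v^4 ≤ 16/2401 := by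
      calc v^4 ≤ (2/7)^4 := pow_le_pow_left₀ hv0.le hv27 4
        _ = 16/2401 := by norm_num
    have h5 : v^5 ≤ (16/2401)*v := by
      have h := mul_le_mul_of_nonneg_right h4 hv0.le
      calc v^5 = v^4*v := by ring
        _ ≤ (16/2401)*v := h
    have h6 : v^6 ≤ (32/16807)*v := by
      have h5' : v^5 ≤ 32/16807 := by
        calc v^5 ≤ (2/7)^5 := pow_le_pow_left₀ hv0.le hv27 5
          _ = 32/16807 := by norm_num
      have h := mul_le_mul_of_nonneg_right h5' hv0.le
      calc v^6 = v^5*v := by ring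
        _ ≤ (32/16807)*v := h
    have h7 : v^7 ≤ (64/117649)*v := by
      have h6' : v^6 ≤ 64/117649 := by
        calc v^6 ≤ (2/7)^6 := pow_le_pow_left₀ hv0.le hv27 6
          _ = 64/117649 := by norm_num
      have h := mul_le_mul_of_nonneg_right h6' hv0.le
      calc v^7 = v^6*v := by ring
        _ ≤ (64/117649)*v := h
    have q2 : (0:ℝ) ≤ v^2 := by positivity
    have q3 : (0:ℝ) ≤ v^3 := by positivity
    have q4 : (0:ℝ) ≤ v^4 := by positivity
    have q8 : (0:ℝ) ≤ v^8 := by positivity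
    linarith [h5, h6, h7, q2, q3, q4, q8, hv0.le]
  -- combine
  have hbT : b * (Real.log (b+1) - Real.log b)
      ≤ (1-v)/(2*v) * (2*v + 2*v^3/3 + 2*v^5/5 + 2*v^7/7 + 2*v^9/(9*(1-v^2))) := by
    rw [hlogfrac, ← hbv]
    exact mul_le_mul_of_nonneg_left h1 hb0.le
  have hT2 : Real.log (2*(b+1)+1) - Real.log (2*b+1)
      ≤ 2*v - (2*v)^2/2 + (2*v)^3/3 - (2*v)^4/4 + (2*v)^5/5 - (2*v)^6/6 + (2*v)^7/7
          - (2*v)^8/8 + (2*v)^9/9 := by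
    rw [hlogfrac2]
    exact h2
  have hrat : 1/(6*(b+3/8)) - 1/(6*((b+1)+3/8))
      = 1/(6*((1-v)/(2*v)+3/8)) - 1/(6*((1-v)/(2*v)+1+3/8)) := by
    rw [← hbv]
  linarith [hmain, hbT, hT2, hrat]


lemma batir_log (a : ℝ) (ha : 0 ≤ a) :
    a * Real.log a - a + Real.log (2*a+1)/2 + 4/9 - 1/(6*(a+3/8))
      ≤ Real.log (Real.Gamma (a+1)) := by
  have key : ∀ n : ℕ, ∀ b : ℝ, 0 ≤ b → b ≤ 9/4 + n →
      b * Real.log b - b + Real.log (2*b+1)/2 + 4/9 - 1/(6*(b+3/8))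
        ≤ Real.log (Real.Gamma (b+1)) := by
    intro n
    induction n with
    | zero =>
      intro b h0 h1
      exact batir_base b h0 (by norm_num at h1; linarith)
    | succ n ih =>
      intro b h0 h1
      by_cases hle : b ≤ 9/4 + n
      · exact ih b h0 hle
      · push_neg at hle
        have hn0 : (0:ℝ) ≤ (n:ℝ) := Nat.cast_nonneg n
        have hb54 : 5/4 ≤ b - 1 := by linarith
        have ih' := ih (b-1) (by linarith) (by push_cast at h1 ⊢; linarith)
        have hstep := batir_step hb54
        rw [show b - 1 + 1 = b by ring] at hstep
        have hbpos : (0:ℝ) < b := by linarith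
        have hGpos : 0 < Real.Gamma b := Real.Gamma_pos_of_pos hbpos
        have hG : Real.log (Real.Gamma (b+1)) = Real.log b + Real.log (Real.Gamma b) := by
          rw [Real.Gamma_add_one hbpos.ne', Real.log_mul hbpos.ne' hGpos.ne']
        rw [hG]
        rw [show b - 1 + 1 = b by ring] at ih'
        linarith [hstep, ih']
  obtain ⟨n, hn⟩ := exists_nat_ge a
  exact key n a ha (by linarith)

lemma batir (a : ℝ) (ha : 0 ≤ a) :
    a ^ a * Real.exp (-a) * Real.sqrt (2*a+1) * Real.exp (4/9 - 1/(6*(a+3/8)))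
      ≤ Real.Gamma (a+1) := by
  rcases eq_or_lt_of_le ha with rfl | ha0
  · rw [Real.rpow_zero]
    norm_num
  · have hG : 0 < Real.Gamma (a+1) := Real.Gamma_pos_of_pos (by linarith)
    have hlog := batir_log a ha
    have hsq : (0:ℝ) < 2*a+1 := by linarith
    have e1 : a ^ a = Real.exp (Real.log a * a) := Real.rpow_def_of_pos ha0 a
    have e2 : Real.sqrt (2*a+1) = Real.exp (Real.log (2*a+1)/2) := by
      rw [← Real.log_sqrt hsq.le, Real.exp_log (Real.sqrt_pos.mpr hsq)]
    calc a ^ a * Real.exp (-a) * Real.sqrt (2*a+1) * Real.exp (4/9 - 1/(6*(a+3/8)))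
        = Real.exp (Real.log a * a + -a + Real.log (2*a+1)/2 + (4/9 - 1/(6*(a+3/8)))) := by
          rw [e1, e2, ← Real.exp_add, ← Real.exp_add, ← Real.exp_add]
      _ ≤ Real.exp (Real.log (Real.Gamma (a+1))) := by
          apply Real.exp_le_exp.mpr
          nlinarith [hlog]
      _ = Real.Gamma (a+1) := Real.exp_log hG

lemma wendel {a s : ℝ} (ha : 0 ≤ a) (hs0 : 0 < s) (hs1 : s ≤ 1) :
    Real.Gamma (a+1) ≤ Real.Gamma (a+s) * (a+s)^(1-s) := by
  rcases eq_or_lt_of_le hs1 with rfl | hs1'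
  · simp
  · have has : (0:ℝ) < a + s := by linarith
    have hc := Real.convexOn_log_Gamma.2 (Set.mem_Ioi.mpr has)
      (Set.mem_Ioi.mpr (show (0:ℝ) < a+s+1 by linarith)) hs0.le
      (show (0:ℝ) ≤ 1 - s by linarith) (by ring)
    simp only [smul_eq_mul, Function.comp_apply] at hc
    rw [show s*(a+s) + (1-s)*(a+s+1) = a+1 by ring] at hc
    have hGas : 0 < Real.Gamma (a+s) := Real.Gamma_pos_of_pos has
    rw [Real.Gamma_add_one has.ne', Real.log_mul has.ne' hGas.ne'] at hc
    have h2 : Real.log (Real.Gamma (a+1))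
        ≤ Real.log (Real.Gamma (a+s)) + (1-s)*Real.log (a+s) := by nlinarith [hc]
    have hG1 : 0 < Real.Gamma (a+1) := Real.Gamma_pos_of_pos (by linarith)
    have h3 := Real.exp_le_exp.mpr h2
    rw [Real.exp_log hG1, Real.exp_add, Real.exp_log hGas] at h3
    rw [show Real.exp ((1-s)*Real.log (a+s)) = (a+s)^(1-s) by
      rw [Real.rpow_def_of_pos has, mul_comm]] at h3
    exact h3

/-- Bound on the maximum of the generalized gamma density: for `k, r ≥ 1` and all
`x > 0`, `φ_{k,r}(x) = r x^{k-1} e^{-x^r}/Γ(k/r)` is at most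
`M_{k,r} = k^{1−1/r} r^{1/r} e^{−4/9} e^{1/(6((k−1)/r+3/8))}/√(2(k−1)/r+1)`,
the maximum being attained at `x₀ = ((k−1)/r)^{1/r}`. -/
theorem gg_density_max_bound (k r : ℝ) (hk : 1 ≤ k) (hr : 1 ≤ r) :
    ∀ x : ℝ, 0 < x →
      r * x ^ (k - 1) * Real.exp (-(x ^ r)) / Real.Gamma (k / r) ≤
        k ^ (1 - 1 / r) * r ^ (1 / r) *
          (Real.exp (-(4 / 9 : ℝ)) * Real.exp (1 / (6 * ((k - 1) / r + 3 / 8))) /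
            Real.sqrt (2 * (k - 1) / r + 1)) := by
  intro x hx
  have hr0 : (0:ℝ) < r := lt_of_lt_of_le one_pos hr
  have hk0 : (0:ℝ) < k := lt_of_lt_of_le one_pos hk
  set a : ℝ := (k-1)/r with hadef
  have ha0' : 0 ≤ a := by rw [hadef]; exact div_nonneg (by linarith) hr0.le
  set s : ℝ := 1/r with hsdef
  clear_value a s
  have ha0 : 0 ≤ a := ha0'
  have hs0 : 0 < s := by rw [hsdef]; positivity
  have hs1 : s ≤ 1 := by rw [hsdef, div_le_one hr0]; exact hr
  have hks : k/r = a + s := by rw [hadef, hsdef]; field_simp; ring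
  have has : (0:ℝ) < a + s := by linarith
  have ht : (0:ℝ) < x^r := Real.rpow_pos_of_pos hx r
  have hsq : (0:ℝ) < 2*a+1 := by linarith
  have hsqrt : (0:ℝ) < Real.sqrt (2*a+1) := Real.sqrt_pos.mpr hsq
  have hapow : (0:ℝ) < a^a := by
    rcases eq_or_lt_of_le ha0 with h0 | h
    · rw [← h0, Real.rpow_zero]; norm_num
    · exact Real.rpow_pos_of_pos h a
  -- numerator bound
  have hnum : x^(k-1) * Real.exp (-(x^r)) ≤ a^a * Real.exp (-a) := by
    have hexp : x^(k-1) = (x^r)^a := by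
      rw [← Real.rpow_mul hx.le]
      congr 1
      rw [hadef]
      field_simp
    rw [hexp]
    rcases eq_or_lt_of_le ha0 with h0 | hapos
    · rw [← h0, Real.rpow_zero, Real.rpow_zero]
      rw [neg_zero, Real.exp_zero, one_mul, mul_one]
      rw [← Real.exp_zero]
      exact Real.exp_le_exp.mpr (by linarith)
    · have hlt : Real.log (x^r / a) ≤ x^r/a - 1 := Real.log_le_sub_one_of_pos (by positivity)
      rw [Real.log_div ht.ne' hapos.ne'] at hlt
      have key : a * Real.log (x^r) - x^r ≤ a * Real.log a - a := by
        have h2 : a*(x^r/a - 1) = x^r - a := by field_simp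
        nlinarith [mul_le_mul_of_nonneg_left hlt hapos.le]
      have e1 : (x^r)^a = Real.exp (Real.log (x^r) * a) := Real.rpow_def_of_pos ht a
      have e2 : a^a = Real.exp (Real.log a * a) := Real.rpow_def_of_pos hapos a
      rw [e1, e2, ← Real.exp_add, ← Real.exp_add]
      apply Real.exp_le_exp.mpr
      nlinarith [key]
  -- Wendel + Batir
  have hW := wendel ha0 hs0 hs1
  have hGas : 0 < Real.Gamma (a+s) := Real.Gamma_pos_of_pos has
  have hBa := batir a ha0
  have hLBpos : (0:ℝ) < a^a * Real.exp (-a) * Real.sqrt (2*a+1)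
      * Real.exp (4/9 - 1/(6*(a+3/8))) := by positivity
  have hpow : (0:ℝ) < (a+s)^(1-s) := Real.rpow_pos_of_pos has _
  have hGge : (a^a * Real.exp (-a) * Real.sqrt (2*a+1) * Real.exp (4/9 - 1/(6*(a+3/8))))
      / (a+s)^(1-s) ≤ Real.Gamma (a+s) := by
    rw [div_le_iff₀ hpow]
    exact le_trans hBa hW
  have hnum' : r * x^(k-1) * Real.exp (-(x^r)) ≤ r * (a^a * Real.exp (-a)) := by
    rw [mul_assoc]
    exact mul_le_mul_of_nonneg_left hnum hr0.le
  rw [hks]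
  have step1 : r * x^(k-1) * Real.exp (-(x^r)) / Real.Gamma (a+s)
      ≤ r * (a^a * Real.exp (-a))
        / ((a^a * Real.exp (-a) * Real.sqrt (2*a+1) * Real.exp (4/9 - 1/(6*(a+3/8))))
            / (a+s)^(1-s)) := by
    apply div_le_div₀ (by positivity) hnum' (by positivity) hGge
  refine le_trans step1 (le_of_eq ?_)
  -- algebraic identification with the RHS
  have hrr : r^s * r^(1-s) = r := by
    rw [← Real.rpow_add hr0]
    norm_num
  have hrpow : r * (a+s)^(1-s) = k^(1-s) * r^s := by
    rw [← hks, Real.div_rpow hk0.le hr0.le]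
    have h1 : (0:ℝ) < r^(1-s) := Real.rpow_pos_of_pos hr0 _
    field_simp
    rw [mul_comm, hrr]
  have hsqarg : 2*(k-1)/r + 1 = 2*a+1 := by rw [hadef]; ring
  rw [hsqarg]
  have hE : Real.exp (-(4/9:ℝ)) * Real.exp (1/(6*(a+3/8))) * Real.exp (4/9 - 1/(6*(a+3/8))) = 1 := by
    rw [← Real.exp_add, ← Real.exp_add,
      show (-(4/9:ℝ)) + 1/(6*(a+3/8)) + (4/9 - 1/(6*(a+3/8))) = 0 by ring, Real.exp_zero]
  rw [div_div_eq_mul_div, ← mul_div_assoc, div_eq_div_iff (by positivity) hsqrt.ne']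
  rw [← hrpow]
  linear_combination (-(r*(a+s)^(1-s)*(a^a*Real.exp (-a))*Real.sqrt (2*a+1))) * hE
end

section
/- Let X be a positive random variable, ξ a real random variable, and suppose P[|ξ| ≥ t | X] ≤ c_1 e^{−c_2 t²/X} for all t > 0, for constants c_1, c_2 > 1. Then there is a constant C depending only on k, r ≥ 1 such that the Kolmogorov distance satisfies d_K(L(X+ξ), GG(k,r)) ≤ C·( d_K(L(X), GG(k,r)) + (1 + c_1 + log c_2)/√c_2 ). -/
set_option maxHeartbeats 1000000


open MeasureTheory Set Real

/-- The generalized gamma distribution `GG(k,r)` as a measure on `ℝ`, with density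
`r x^{k−1} e^{−x^r}/Γ(k/r)` on `(0,∞)`. -/
noncomputable def ggMeasure (k r : ℕ) : Measure ℝ :=
  (volume.restrict (Ioi (0:ℝ))).withDensity fun x =>
    ENNReal.ofReal ((r : ℝ) * x ^ (k - 1) * Real.exp (-(x ^ r)) / Real.Gamma ((k : ℝ) / r))

/-- Kolmogorov (sup-CDF) distance between two measures on `ℝ`. -/
noncomputable def kolmogorovDist (P Q : Measure ℝ) : ℝ :=
  ⨆ x : ℝ, |(P (Iic x)).toReal - (Q (Iic x)).toReal|



lemma aux_pow_le (n : ℕ) {x : ℝ} (hx : 0 ≤ x) : x ^ n ≤ n.factorial * Real.exp x := by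
  have h1 : x ^ n / n.factorial ≤ Real.exp x := by
    calc x ^ n / n.factorial
        ≤ ∑ i ∈ Finset.range (n+1), x ^ i / i.factorial := by
          refine Finset.single_le_sum (f := fun i => x ^ i / (i.factorial : ℝ)) ?_
            (Finset.self_mem_range_succ n)
          intro i _
          positivity
      _ ≤ Real.exp x := Real.sum_le_exp_of_nonneg hx _
  have h2 : (0:ℝ) < n.factorial := by exact_mod_cast n.factorial_pos
  calc x ^ n = n.factorial * (x ^ n / n.factorial) := by field_simp
    _ ≤ n.factorial * Real.exp x := by
        exact mul_le_mul_of_nonneg_left h1 (le_of_lt h2)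

lemma aux_sub_one_le_pow {r : ℕ} (hr : 1 ≤ r) {x : ℝ} (hx : 0 ≤ x) : x - 1 ≤ x ^ r := by
  rcases le_total x 1 with h | h
  · have : (0:ℝ) ≤ x ^ r := pow_nonneg hx r
    linarith
  · have h1 : x ^ 1 ≤ x ^ r := pow_le_pow_right₀ h hr
    rw [pow_one] at h1
    linarith

/-- Constant bounding the GG density by `ggA * exp(-x/2)`. -/
noncomputable def ggA (k r : ℕ) : ℝ :=
  (r : ℝ) * 2 ^ (k - 1) * (k.factorial : ℝ) * Real.exp 1 / Real.Gamma ((k : ℝ) / r)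

lemma ggGamma_pos {k r : ℕ} (hk : 1 ≤ k) (hr : 1 ≤ r) : 0 < Real.Gamma ((k : ℝ) / r) := by
  apply Real.Gamma_pos_of_pos
  have hk' : (0:ℝ) < k := by exact_mod_cast hk
  have hr' : (0:ℝ) < r := by exact_mod_cast hr
  positivity

lemma ggA_pos {k r : ℕ} (hk : 1 ≤ k) (hr : 1 ≤ r) : 0 < ggA k r := by
  have hΓ := ggGamma_pos hk hr
  have hr' : (0:ℝ) < r := by exact_mod_cast hr
  have hf : (0:ℝ) < k.factorial := by exact_mod_cast k.factorial_pos
  unfold ggA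
  positivity

lemma ggDen_le {k r : ℕ} (hk : 1 ≤ k) (hr : 1 ≤ r) {x : ℝ} (hx : 0 ≤ x) :
    (r : ℝ) * x ^ (k - 1) * Real.exp (-(x ^ r)) / Real.Gamma ((k : ℝ) / r)
      ≤ ggA k r * Real.exp (-(x / 2)) := by
  have hΓ := ggGamma_pos hk hr
  have hr' : (0:ℝ) ≤ r := by positivity
  have h1 : x ^ (k - 1) ≤ 2 ^ (k - 1) * (k.factorial : ℝ) * Real.exp (x / 2) := by
    have hx2 : (0:ℝ) ≤ x / 2 := by linarith
    have := aux_pow_le (k - 1) hx2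
    have hfact : ((k-1).factorial : ℝ) ≤ (k.factorial : ℝ) := by
      exact_mod_cast Nat.factorial_le (Nat.sub_le k 1)
    have hxeq : x ^ (k - 1) = 2 ^ (k - 1) * (x / 2) ^ (k - 1) := by
      rw [← mul_pow, mul_div_cancel₀ x two_ne_zero]
    rw [hxeq]
    have hexp : (0:ℝ) ≤ Real.exp (x/2) := (Real.exp_pos _).le
    calc (2:ℝ) ^ (k-1) * (x / 2) ^ (k - 1)
        ≤ 2 ^ (k-1) * (((k-1).factorial : ℝ) * Real.exp (x/2)) := by
          apply mul_le_mul_of_nonneg_left this (by positivity)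
      _ ≤ 2 ^ (k-1) * ((k.factorial : ℝ) * Real.exp (x/2)) := by
          have : ((k-1).factorial : ℝ) * Real.exp (x/2) ≤ (k.factorial : ℝ) * Real.exp (x/2) :=
            mul_le_mul_of_nonneg_right hfact hexp
          apply mul_le_mul_of_nonneg_left this (by positivity)
      _ = 2 ^ (k-1) * (k.factorial : ℝ) * Real.exp (x/2) := by ring
  have h2 : Real.exp (-(x ^ r)) ≤ Real.exp 1 * Real.exp (-x) := by
    rw [← Real.exp_add]
    apply Real.exp_le_exp.mpr
    have := aux_sub_one_le_pow hr hx
    linarith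
  have hnum : (r : ℝ) * x ^ (k - 1) * Real.exp (-(x ^ r))
      ≤ (r : ℝ) * 2 ^ (k - 1) * (k.factorial : ℝ) * Real.exp 1 * Real.exp (-(x / 2)) := by
    have step : (r : ℝ) * x ^ (k - 1) * Real.exp (-(x ^ r))
        ≤ (r : ℝ) * (2 ^ (k - 1) * (k.factorial : ℝ) * Real.exp (x / 2)) *
          (Real.exp 1 * Real.exp (-x)) := by
      apply mul_le_mul
      · exact mul_le_mul_of_nonneg_left h1 hr'
      · exact h2
      · exact (Real.exp_pos _).le
      · positivity
    refine step.trans_eq ?_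
    have hexpeq : Real.exp (x / 2) * (Real.exp 1 * Real.exp (-x)) = Real.exp 1 * Real.exp (-(x/2)) := by
      rw [← Real.exp_add, ← Real.exp_add, ← Real.exp_add]
      ring_nf
    calc (r : ℝ) * (2 ^ (k - 1) * (k.factorial : ℝ) * Real.exp (x / 2)) *
          (Real.exp 1 * Real.exp (-x))
        = (r : ℝ) * 2 ^ (k - 1) * (k.factorial : ℝ) *
            (Real.exp (x / 2) * (Real.exp 1 * Real.exp (-x))) := by ring
      _ = (r : ℝ) * 2 ^ (k - 1) * (k.factorial : ℝ) * Real.exp 1 * Real.exp (-(x / 2)) := by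
          rw [hexpeq]; ring
  unfold ggA
  rw [div_mul_eq_mul_div]
  gcongr

lemma ggMeasure_apply (k r : ℕ) {s : Set ℝ} (hs : MeasurableSet s) :
    ggMeasure k r s = ∫⁻ x in s ∩ Ioi 0,
      ENNReal.ofReal ((r : ℝ) * x ^ (k - 1) * Real.exp (-(x ^ r)) / Real.Gamma ((k : ℝ) / r)) := by
  rw [ggMeasure, withDensity_apply _ hs, Measure.restrict_restrict hs]

lemma gg_integrableOn (k r : ℕ) (hk : 1 ≤ k) (hr : 1 ≤ r) :
    IntegrableOn (fun x : ℝ => x ^ (k - 1) * Real.exp (-(x ^ r))) (Ioi 0) := by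
  have hk1 : (1:ℝ) ≤ (k:ℝ) := by exact_mod_cast hk
  have h := integrableOn_rpow_mul_exp_neg_rpow (p := (r:ℝ)) (s := (k:ℝ) - 1)
    (by linarith) (by exact_mod_cast hr)
  refine h.congr_fun ?_ measurableSet_Ioi
  intro x hx
  have hx' : (0:ℝ) < x := hx
  show x ^ ((k:ℝ) - 1) * Real.exp (-x ^ (r:ℝ)) = x ^ (k - 1) * Real.exp (-(x ^ r))
  rw [← Real.rpow_natCast x (k-1), ← Real.rpow_natCast x r]
  congr 2
  push_cast [Nat.cast_sub hk]
  ring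

lemma ggDen_integrableOn (k r : ℕ) (hk : 1 ≤ k) (hr : 1 ≤ r) :
    IntegrableOn (fun x : ℝ =>
      (r : ℝ) * x ^ (k - 1) * Real.exp (-(x ^ r)) / Real.Gamma ((k : ℝ) / r)) (Ioi 0) := by
  have h := (gg_integrableOn k r hk hr).const_mul ((r : ℝ) / Real.Gamma ((k : ℝ) / r))
  refine IntegrableOn.congr_fun h (fun x _ => ?_) measurableSet_Ioi
  show _ = (r : ℝ) * x ^ (k - 1) * Real.exp (-(x ^ r)) / Real.Gamma ((k : ℝ) / r)
  ring

lemma ggDen_integral (k r : ℕ) (hk : 1 ≤ k) (hr : 1 ≤ r) :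
    ∫ x in Ioi (0:ℝ),
      (r : ℝ) * x ^ (k - 1) * Real.exp (-(x ^ r)) / Real.Gamma ((k : ℝ) / r) = 1 := by
  have hΓ := ggGamma_pos hk hr
  have hk1 : (1:ℝ) ≤ (k:ℝ) := by exact_mod_cast hk
  have hr' : (0:ℝ) < r := by exact_mod_cast hr
  have key : ∫ x in Ioi (0:ℝ), x ^ ((k:ℝ) - 1) * Real.exp (-x ^ (r:ℝ))
      = (1 / (r:ℝ)) * Real.Gamma (((k:ℝ) - 1 + 1) / r) :=
    integral_rpow_mul_exp_neg_rpow hr' (by linarith)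
  have heq : ∀ x ∈ Ioi (0:ℝ),
      (r : ℝ) * x ^ (k - 1) * Real.exp (-(x ^ r)) / Real.Gamma ((k : ℝ) / r)
      = ((r:ℝ) / Real.Gamma ((k:ℝ)/r)) * (x ^ ((k:ℝ) - 1) * Real.exp (-x ^ (r:ℝ))) := by
    intro x hx
    have hx' : (0:ℝ) < x := hx
    rw [← Real.rpow_natCast x (k-1), ← Real.rpow_natCast x r]
    push_cast [Nat.cast_sub hk]
    ring
  rw [setIntegral_congr_fun measurableSet_Ioi heq, integral_const_mul, key]
  have : ((k:ℝ) - 1 + 1) = (k:ℝ) := by ring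
  rw [this]
  field_simp

lemma gg_isProbabilityMeasure (k r : ℕ) (hk : 1 ≤ k) (hr : 1 ≤ r) :
    IsProbabilityMeasure (ggMeasure k r) := by
  constructor
  rw [ggMeasure_apply k r MeasurableSet.univ, univ_inter]
  have hΓ := ggGamma_pos hk hr
  rw [← MeasureTheory.ofReal_integral_eq_lintegral_ofReal (ggDen_integrableOn k r hk hr)
    ((ae_restrict_iff' measurableSet_Ioi).mpr (ae_of_all _ (fun x hx => by
      have hx' : (0:ℝ) ≤ x := le_of_lt hx
      exact div_nonneg (by positivity) hΓ.le)))]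
  rw [ggDen_integral k r hk hr]
  norm_num

lemma gg_Ioc_le (k r : ℕ) (hk : 1 ≤ k) (hr : 1 ≤ r) {a b : ℝ} (hab : a ≤ b) :
    (ggMeasure k r (Ioc a b)).toReal ≤ ggA k r * (b - a) := by
  have hA := (ggA_pos hk hr).le
  refine ENNReal.toReal_le_of_le_ofReal (by nlinarith) ?_
  rw [ggMeasure_apply k r measurableSet_Ioc]
  calc ∫⁻ x in Ioc a b ∩ Ioi 0,
        ENNReal.ofReal ((r : ℝ) * x ^ (k - 1) * Real.exp (-(x ^ r)) / Real.Gamma ((k : ℝ) / r))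
      ≤ ∫⁻ _ in Ioc a b ∩ Ioi 0, ENNReal.ofReal (ggA k r) := by
        refine setLIntegral_mono measurable_const (fun x hx => ?_)
        refine ENNReal.ofReal_le_ofReal ?_
        have hx0 : (0:ℝ) ≤ x := le_of_lt hx.2
        refine (ggDen_le hk hr hx0).trans ?_
        have : Real.exp (-(x/2)) ≤ 1 := by
          rw [← Real.exp_zero]
          exact Real.exp_le_exp.mpr (by linarith)
        nlinarith
    _ = ENNReal.ofReal (ggA k r) * volume (Ioc a b ∩ Ioi 0) := setLIntegral_const _ _
    _ ≤ ENNReal.ofReal (ggA k r) * ENNReal.ofReal (b - a) := by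
        refine mul_le_mul_right ?_ _
        refine (measure_mono inter_subset_left).trans ?_
        rw [Real.volume_Ioc]
    _ = ENNReal.ofReal (ggA k r * (b - a)) := (ENNReal.ofReal_mul hA).symm

lemma gg_tail (k r : ℕ) (hk : 1 ≤ k) (hr : 1 ≤ r) {T : ℝ} (hT : 0 ≤ T) :
    (ggMeasure k r (Ioi T)).toReal ≤ 2 * ggA k r * Real.exp (-(T/2)) := by
  have hA := (ggA_pos hk hr).le
  have hsub : Ioi T ⊆ Ioi (0:ℝ) := fun x hx => lt_of_le_of_lt hT hx
  have hint : IntegrableOn (fun x : ℝ => ggA k r * Real.exp (-(x/2))) (Ioi T) := by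
    have h := (exp_neg_integrableOn_Ioi T (by norm_num : (0:ℝ) < 1/2)).const_mul (ggA k r)
    refine IntegrableOn.congr_fun h (fun x _ => ?_) measurableSet_Ioi
    show ggA k r * Real.exp (-(1/2) * x) = ggA k r * Real.exp (-(x/2))
    ring_nf
  have hval : ∫ x in Ioi T, ggA k r * Real.exp (-(x/2)) = ggA k r * (2 * Real.exp (-(T/2))) := by
    rw [integral_const_mul]
    congr 1
    have heq : ∀ x : ℝ, -(x/2) = -(x * (1/2)) := fun x => by ring
    simp_rw [heq]
    rw [integral_comp_mul_right_Ioi (fun x => Real.exp (-x)) T (by norm_num : (0:ℝ) < 1/2),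
      integral_exp_neg_Ioi]
    rw [smul_eq_mul]
    norm_num
  refine ENNReal.toReal_le_of_le_ofReal (by positivity) ?_
  rw [ggMeasure_apply k r measurableSet_Ioi, inter_eq_left.mpr hsub]
  calc ∫⁻ x in Ioi T,
        ENNReal.ofReal ((r : ℝ) * x ^ (k - 1) * Real.exp (-(x ^ r)) / Real.Gamma ((k : ℝ) / r))
      ≤ ∫⁻ x in Ioi T, ENNReal.ofReal (ggA k r * Real.exp (-(x/2))) := by
        refine setLIntegral_mono (by fun_prop) (fun x hx => ?_)
        exact ENNReal.ofReal_le_ofReal (ggDen_le hk hr (hT.trans (le_of_lt hx)))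
    _ = ENNReal.ofReal (∫ x in Ioi T, ggA k r * Real.exp (-(x/2))) := by
        rw [MeasureTheory.ofReal_integral_eq_lintegral_ofReal hint
          (ae_of_all _ (fun x => by positivity))]
    _ ≤ ENNReal.ofReal (2 * ggA k r * Real.exp (-(T/2))) := by
        rw [hval]
        exact ENNReal.ofReal_le_ofReal (by nlinarith [Real.exp_pos (-(T/2))])

/-- Perturbation lemma under a conditional Gaussian-type tail: for integers
`k, r ≥ 1` there is a constant `C = C(k,r)` such that, if
`P[|ξ| ≥ t | X] ≤ c₁ e^{−c₂ t²/X}` for all `t > 0` with constants `c₁, c₂ > 1`, then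
`d_K(L(X+ξ), GG(k,r)) ≤ C (d_K(L(X), GG(k,r)) + (1 + c₁ + log c₂)/√c₂)`. -/
theorem gg_perturbation_gaussian_tail (k r : ℕ) (hk : 1 ≤ k) (hr : 1 ≤ r) :
    ∃ C : ℝ, 0 < C ∧
      ∀ (Ω : Type) (mΩ : MeasurableSpace Ω) (μ : Measure Ω),
        IsProbabilityMeasure μ →
        ∀ (X ξ : Ω → ℝ), Measurable X → Measurable ξ → (∀ ω, 0 < X ω) →
        ∀ c₁ c₂ : ℝ, 1 < c₁ → 1 < c₂ →
        (∀ t : ℝ, 0 < t →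
          ∀ᵐ ω ∂μ,
            (μ[Set.indicator {ω' | t ≤ |ξ ω'|} (fun _ => (1:ℝ)) |
                MeasurableSpace.comap X inferInstance]) ω
              ≤ c₁ * Real.exp (-c₂ * t ^ 2 / X ω)) →
        kolmogorovDist (Measure.map (fun ω => X ω + ξ ω) μ) (ggMeasure k r)
          ≤ C * (kolmogorovDist (Measure.map X μ) (ggMeasure k r) +
              (1 + c₁ + Real.log c₂) / Real.sqrt c₂) := by
  have hA : 0 < ggA k r := ggA_pos hk hr
  set A := ggA k r with hAdef
  refine ⟨4 * A + 3, by positivity, ?_⟩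
  intro Ω mΩ μ hμ X ξ hX hξ hXpos c₁ c₂ hc₁ hc₂ htail
  haveI := hμ
  haveI hGG : IsProbabilityMeasure (ggMeasure k r) := gg_isProbabilityMeasure k r hk hr
  have hc₁0 : (0:ℝ) < c₁ := by linarith
  have hc₂0 : (0:ℝ) < c₂ := by linarith
  have hL : 0 < Real.log c₂ := Real.log_pos hc₂
  set L := Real.log c₂ with hLdef
  have hβpos : 0 < Real.log c₁ + L := by
    have := Real.log_pos hc₁; linarith
  set β := Real.log c₁ + L with hβdef
  set T := 2 * L with hTdef
  have hT : 0 < T := by rw [hTdef]; linarith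
  set ε := Real.sqrt (2 * L * β / c₂) with hεdef
  have hε : 0 < ε := Real.sqrt_pos.mpr (by positivity)
  have hε2 : ε ^ 2 = 2 * L * β / c₂ := Real.sq_sqrt (by positivity)
  have hXξ : Measurable (fun ω => X ω + ξ ω) := hX.add hξ
  haveI : IsProbabilityMeasure (Measure.map (fun ω => X ω + ξ ω) μ) :=
    Measure.isProbabilityMeasure_map hXξ.aemeasurable
  haveI : IsProbabilityMeasure (Measure.map X μ) := Measure.isProbabilityMeasure_map hX.aemeasurable
  set G := ggMeasure k r with hGdef
  set ν := Measure.map (fun ω => X ω + ξ ω) μ with hνdef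
  set νX := Measure.map X μ with hνXdef
  set d := kolmogorovDist νX G with hddef
  -- toReal of prob measures is ≤ 1
  have tr1 : ∀ (P : Measure ℝ), IsProbabilityMeasure P → ∀ s : Set ℝ, (P s).toReal ≤ 1 := by
    intro P hP s
    exact ENNReal.toReal_le_of_le_ofReal one_pos.le (by simpa using prob_le_one)
  have hbdd : BddAbove (Set.range fun x : ℝ => |(νX (Iic x)).toReal - (G (Iic x)).toReal|) := by
    refine ⟨2, ?_⟩
    rintro y ⟨x, rfl⟩
    have h1 := tr1 νX inferInstance (Iic x)
    have h2 := tr1 G inferInstance (Iic x)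
    have h3 : (0:ℝ) ≤ (νX (Iic x)).toReal := ENNReal.toReal_nonneg
    have h4 : (0:ℝ) ≤ (G (Iic x)).toReal := ENNReal.toReal_nonneg
    rw [abs_le]
    constructor <;> linarith
  have hd_le : ∀ x : ℝ, |(νX (Iic x)).toReal - (G (Iic x)).toReal| ≤ d := by
    intro x
    exact le_ciSup hbdd x
  have hd0 : 0 ≤ d := (abs_nonneg _).trans (hd_le 0)
  -- the bad set S and its probability p
  set S := {ω' | ε ≤ |ξ ω'|} with hSdef
  have hSm : MeasurableSet S := measurableSet_le measurable_const hξ.abs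
  set p := (μ S).toReal with hpdef
  have hp0 : 0 ≤ p := ENNReal.toReal_nonneg
  -- conditional expectation bound gives p ≤ 1/c₂ + d + 2A/c₂
  have hm : MeasurableSpace.comap X inferInstance ≤ mΩ := hX.comap_le
  have hfi : Integrable (S.indicator fun _ => (1:ℝ)) μ := (integrable_const (1:ℝ)).indicator hSm
  have hUm : MeasurableSet {ω | T < X ω} := measurableSet_lt measurable_const hX
  have hgint : Integrable (fun ω => 1/c₂ + Set.indicator {ω | T < X ω} (fun _ => (1:ℝ)) ω) μ :=
    (integrable_const _).add ((integrable_const (1:ℝ)).indicator hUm)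
  have hle1 : (μ[S.indicator fun _ => (1:ℝ) | MeasurableSpace.comap X inferInstance])
      ≤ᵐ[μ] fun _ => (1:ℝ) := by
    have h := condExp_mono (μ := μ) (m := MeasurableSpace.comap X inferInstance)
      hfi (integrable_const (1:ℝ))
      (ae_of_all _ (fun ω => by
        by_cases hω : ω ∈ S
        · simp [Set.indicator_of_mem hω]
        · simp [Set.indicator_of_notMem hω]))
    rwa [condExp_const hm] at h
  have hkey : (μ[S.indicator fun _ => (1:ℝ) | MeasurableSpace.comap X inferInstance])
      ≤ᵐ[μ] fun ω => 1/c₂ + Set.indicator {ω | T < X ω} (fun _ => (1:ℝ)) ω := by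
    filter_upwards [hle1, htail ε hε] with ω h1 h2
    by_cases hω : X ω ≤ T
    · have hXp := hXpos ω
      have h3 : β ≤ c₂ * ε^2 / X ω := by
        rw [hε2]
        have he : c₂ * (2 * L * β / c₂) = 2 * L * β := by field_simp
        rw [he]
        have h4 : 2 * L * β / T ≤ 2 * L * β / X ω :=
          div_le_div_of_nonneg_left (by positivity) hXp hω
        have h5 : 2 * L * β / T = β := by rw [hTdef]; field_simp
        linarith
      have h5 : Real.exp (-c₂ * ε^2 / X ω) ≤ Real.exp (-β) := by
        apply Real.exp_le_exp.mpr
        have : -c₂ * ε^2 / X ω = -(c₂ * ε^2 / X ω) := by ring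
        rw [this]
        linarith
      have h6 : c₁ * Real.exp (-β) = 1/c₂ := by
        rw [hβdef, hLdef, neg_add, Real.exp_add, Real.exp_neg, Real.exp_neg,
          Real.exp_log hc₁0, Real.exp_log hc₂0]
        field_simp
      have h7 : (0:ℝ) ≤ Set.indicator {ω | T < X ω} (fun _ => (1:ℝ)) ω :=
        Set.indicator_nonneg (fun _ _ => zero_le_one) ω
      have h8 : c₁ * Real.exp (-c₂ * ε^2 / X ω) ≤ 1/c₂ := by
        calc c₁ * Real.exp (-c₂ * ε^2 / X ω) ≤ c₁ * Real.exp (-β) :=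
              mul_le_mul_of_nonneg_left h5 hc₁0.le
          _ = 1/c₂ := h6
      linarith [h2, h8]
    · have hmem : ω ∈ {ω | T < X ω} := not_le.mp hω
      rw [Set.indicator_of_mem hmem]
      have : (0:ℝ) < 1/c₂ := by positivity
      linarith [h1]
  have hpbound : p ≤ 1/c₂ + d + 2 * A * (1/c₂) := by
    have hint1 : ∫ ω, (μ[S.indicator fun _ => (1:ℝ) |
        MeasurableSpace.comap X inferInstance]) ω ∂μ = p := by
      rw [integral_condExp hm, integral_indicator hSm]
      simp [hpdef]
      rfl
    have hint2 : ∫ ω, (1/c₂ + Set.indicator {ω | T < X ω} (fun _ => (1:ℝ)) ω) ∂μ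
        = 1/c₂ + (μ {ω | T < X ω}).toReal := by
      rw [integral_add (integrable_const _) ((integrable_const (1:ℝ)).indicator hUm),
        integral_const, integral_indicator hUm]
      simp
      rfl
    have hmono := integral_mono_ae integrable_condExp hgint hkey
    rw [hint1, hint2] at hmono
    -- bound μ {T < X}
    have hmap : μ {ω | T < X ω} = νX (Ioi T) := by
      rw [hνXdef, Measure.map_apply hX measurableSet_Ioi]
      rfl
    have hcompl : (νX (Ioi T)).toReal = 1 - (νX (Iic T)).toReal := by
      rw [← compl_Iic, measure_compl measurableSet_Iic (measure_ne_top _ _), measure_univ,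
        ENNReal.toReal_sub_of_le prob_le_one ENNReal.one_ne_top]
      simp
    have hcomplG : (G (Ioi T)).toReal = 1 - (G (Iic T)).toReal := by
      rw [← compl_Iic, measure_compl measurableSet_Iic (measure_ne_top _ _), measure_univ,
        ENNReal.toReal_sub_of_le prob_le_one ENNReal.one_ne_top]
      simp
    have hdT := (abs_le.mp (hd_le T)).1
    have htailG : (G (Ioi T)).toReal ≤ 2 * A * Real.exp (-(T/2)) := gg_tail k r hk hr hT.le
    have hexpT : Real.exp (-(T/2)) = 1/c₂ := by
      rw [hTdef, hLdef]
      have : -(2 * Real.log c₂ / 2) = -Real.log c₂ := by ring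
      rw [this, Real.exp_neg, Real.exp_log hc₂0]
      exact (one_div c₂).symm
    have h9 : (μ {ω | T < X ω}).toReal ≤ d + 2 * A * (1/c₂) := by
      rw [hmap, hcompl]
      have hGio : (G (Ioi T)).toReal ≤ 2 * A * (1/c₂) := by
        rw [hexpT] at htailG
        linarith [htailG]
      rw [hcomplG] at hGio
      linarith
    linarith
  -- splitting lemma for measures
  have hsplit : ∀ (s t u : Set Ω), s ⊆ t ∪ u → (μ s).toReal ≤ (μ t).toReal + (μ u).toReal := by
    intro s t u hsub
    have h := (measure_mono (μ := μ) hsub).trans (measure_union_le (μ := μ) t u)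
    have h2 := ENNReal.toReal_mono
      (ENNReal.add_ne_top.mpr ⟨measure_ne_top μ t, measure_ne_top μ u⟩) h
    rwa [ENNReal.toReal_add (measure_ne_top μ t) (measure_ne_top μ u)] at h2
  -- G increments
  have hGinc : ∀ y z : ℝ, y ≤ z → (G (Iic z)).toReal ≤ (G (Iic y)).toReal + A * (z - y) := by
    intro y z hyz
    have hdecomp : Iic z = Iic y ∪ Ioc y z := (Iic_union_Ioc_eq_Iic hyz).symm
    rw [hdecomp, measure_union (Iic_disjoint_Ioc le_rfl) measurableSet_Ioc,
      ENNReal.toReal_add (measure_ne_top _ _) (measure_ne_top _ _)]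
    have := gg_Ioc_le k r hk hr hyz
    linarith
  -- per-x bounds
  have hup : ∀ x : ℝ, (ν (Iic x)).toReal - (G (Iic x)).toReal ≤ d + A * ε + p := by
    intro x
    have h1 : (ν (Iic x)).toReal ≤ (νX (Iic (x + ε))).toReal + p := by
      rw [hνdef, hνXdef, Measure.map_apply hXξ measurableSet_Iic,
        Measure.map_apply hX measurableSet_Iic, hpdef]
      apply hsplit
      intro ω hω
      by_cases h : ε ≤ |ξ ω|
      · exact Or.inr h
      · left
        simp only [mem_preimage, mem_Iic] at hω ⊢
        have habs := abs_lt.mp (lt_of_not_ge h)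
        linarith [habs.1]
    have h2 : (νX (Iic (x + ε))).toReal ≤ (G (Iic (x + ε))).toReal + d :=
      by linarith [(abs_le.mp (hd_le (x + ε))).2]
    have h3 := hGinc x (x + ε) (by linarith)
    rw [show x + ε - x = ε from by ring] at h3
    linarith
  have hlo : ∀ x : ℝ, (G (Iic x)).toReal - (ν (Iic x)).toReal ≤ d + A * ε + p := by
    intro x
    have h3 := hGinc (x - ε) x (by linarith)
    rw [show x - (x - ε) = ε from by ring] at h3
    have h2 : (G (Iic (x - ε))).toReal ≤ (νX (Iic (x - ε))).toReal + d :=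
      by linarith [(abs_le.mp (hd_le (x - ε))).1]
    have h1 : (νX (Iic (x - ε))).toReal ≤ (ν (Iic x)).toReal + p := by
      rw [hνdef, hνXdef, Measure.map_apply hXξ measurableSet_Iic,
        Measure.map_apply hX measurableSet_Iic, hpdef]
      apply hsplit
      intro ω hω
      by_cases h : ε ≤ |ξ ω|
      · exact Or.inr h
      · left
        simp only [mem_preimage, mem_Iic] at hω ⊢
        have habs := abs_lt.mp (lt_of_not_ge h)
        linarith [habs.2, le_abs_self (ξ ω)]
    linarith
  -- assemble the sup bound
  have hsup : kolmogorovDist ν G ≤ d + A * ε + p := by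
    have : kolmogorovDist ν G = ⨆ x : ℝ, |(ν (Iic x)).toReal - (G (Iic x)).toReal| := rfl
    rw [this]
    refine ciSup_le (fun x => ?_)
    rw [abs_le]
    exact ⟨by linarith [hlo x], by linarith [hup x]⟩
  -- final arithmetic
  have hsc : 0 < Real.sqrt c₂ := Real.sqrt_pos.mpr hc₂0
  have hsc1 : Real.sqrt c₂ ≤ c₂ := by
    have h : c₂ ≤ c₂ ^ 2 := by nlinarith
    calc Real.sqrt c₂ ≤ Real.sqrt (c₂ ^ 2) := Real.sqrt_le_sqrt h
      _ = c₂ := Real.sqrt_sq hc₂0.le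
  set Q := (1 + c₁ + L) / Real.sqrt c₂ with hQdef
  have hQ0 : 0 ≤ Q := by positivity
  have hc₂inv : 1/c₂ ≤ Q := by
    have h1 : 1/c₂ ≤ 1/Real.sqrt c₂ := one_div_le_one_div_of_le hsc hsc1
    have h2 : 1/Real.sqrt c₂ ≤ Q := by
      rw [hQdef, div_le_div_iff₀ hsc hsc]
      nlinarith [hL.le, hc₁0.le]
    linarith
  have hεQ : ε ≤ 2 * Q := by
    have hsqd : ε = Real.sqrt (2 * L * β) / Real.sqrt c₂ := by
      rw [hεdef, Real.sqrt_div (by positivity)]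
    have hlog1 : Real.log c₁ ≤ c₁ := by
      have := Real.log_le_sub_one_of_pos hc₁0
      linarith
    have hnum : Real.sqrt (2 * L * β) ≤ 2 * (1 + c₁ + L) := by
      refine (Real.sqrt_le_sqrt (show 2 * L * β ≤ (2 * (1 + c₁ + L))^2 from ?_)).trans ?_
      · rw [hβdef]
        nlinarith [sq_nonneg (1 + c₁ + L), sq_nonneg (c₁ + L), hL.le, hc₁0.le, hlog1]
      · rw [Real.sqrt_sq (by positivity)]
    rw [hsqd, hQdef]
    exact div_le_div_of_nonneg_right hnum hsc.le |>.trans_eq (by ring)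
  have hAε : A * ε ≤ 2 * A * Q := by nlinarith
  have h2Ac : 2 * A * (1/c₂) ≤ 2 * A * Q :=
    mul_le_mul_of_nonneg_left hc₂inv (by positivity : (0:ℝ) ≤ 2 * A)
  have hfinal : d + A * ε + p ≤ (4 * A + 3) * (d + Q) := by
    nlinarith [mul_nonneg hA.le hd0, mul_nonneg hA.le hQ0]
  exact hsup.trans hfinal
end
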